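/- arXiv:2104.15080 — 4 statements merged into one kernel-verified Lean document; each statement's English description precedes it below -/
import Mathlib

section
/- Let P be a d-dimensional lattice polytope in ℝ^d with interior lattice points that has a facet F whose lattice distance to the set of interior lattice points of P is at least 2. Then P admits no unimodular triangulation Δ such that the subcomplex of Δ induced on (∂P) ∩ ℤ^d is a triangulation of ∂P. -/
open scoped BigOperators Pointwise

/-- A point of `ℝ^d` is a *lattice point* if all its coordinates are integers. -/
def IsLatticePt {d : ℕ} (x : Fin d → ℝ) : Prop := ∀ i, ∃ n : ℤ, x i = (n : ℝ)

/-- A *polytope* in `ℝ^d` is the convex hull of a finite point set. -/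
def IsPolytope {d : ℕ} (P : Set (Fin d → ℝ)) : Prop :=
  ∃ V : Finset (Fin d → ℝ), P = convexHull ℝ (V : Set (Fin d → ℝ))

/-- A *lattice polytope* in `ℝ^d`: the convex hull of finitely many lattice points. -/
def IsLatticePolytope {d : ℕ} (P : Set (Fin d → ℝ)) : Prop :=
  ∃ V : Finset (Fin d → ℝ), (∀ v ∈ V, IsLatticePt v) ∧ P = convexHull ℝ (V : Set (Fin d → ℝ))

/-- Full-dimensional (`d`-dimensional) subset of `ℝ^d`: nonempty interior. -/
def IsFullDim {d : ℕ} (P : Set (Fin d → ℝ)) : Prop := (interior P).Nonempty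

/-- `F` is a *facet* of the (full-dimensional) polytope `P` : the intersection of `P`
with a supporting hyperplane, of affine dimension `d - 1`. -/
def IsFacet {d : ℕ} (P F : Set (Fin d → ℝ)) : Prop :=
  ∃ (a : Fin d → ℝ) (c : ℝ), a ≠ 0 ∧ (∀ x ∈ P, (∑ i, a i * x i) ≤ c) ∧
    F = {x ∈ P | (∑ i, a i * x i) = c} ∧
    Module.finrank ℝ (affineSpan ℝ F).direction = d - 1

/-- Extend `y ∈ ℝ^d` to `Fin (d+1)` by the convention `y₀ = 0`. -/
def extCoord {d : ℕ} (y : Fin d → ℝ) : Fin (d + 1) → ℝ := Fin.cons 0 y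

/-- An *alcove hyperplane* in `ℝ^d`: `{y : y_i - y_j = k}` for integer `k` and
indices `i j ∈ {0, 1, …, d}`, with the convention `y₀ = 0`. -/
def IsAlcoveHyperplane {d : ℕ} (H : Set (Fin d → ℝ)) : Prop :=
  ∃ (i j : Fin (d + 1)) (k : ℤ), i ≠ j ∧
    H = {y : Fin d → ℝ | extCoord y i - extCoord y j = (k : ℝ)}

/-- A `d`-dimensional polytope in `ℝ^d` is an *alcoved polytope* if all of its
facet-defining hyperplanes are alcove hyperplanes. -/
def IsAlcovedPolytope {d : ℕ} (P : Set (Fin d → ℝ)) : Prop :=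
  IsPolytope P ∧ IsFullDim P ∧
    ∀ F, IsFacet P F → ∃ H, IsAlcoveHyperplane H ∧ F ⊆ H

/-- The set of interior lattice points of `P`, as points of `ℤ^d`. -/
def interiorLatticePts {d : ℕ} (P : Set (Fin d → ℝ)) : Set (Fin d → ℤ) :=
  {p | (fun i => (p i : ℝ)) ∈ interior P}

/-- Lattice distance between the hyperplane `{x | a·x = b}` (with `a ∈ ℤ^d`, `b ∈ ℤ`)
and a lattice point `p`: it is `0` if `p` lies on the hyperplane and otherwise `n + 1`,
where `n` is the number of parallel translates of the hyperplane through lattice points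
strictly between `p` and the hyperplane. -/
noncomputable def latticeDistAux {d : ℕ} (a : Fin d → ℤ) (b : ℤ) (p : Fin d → ℤ) : ℕ :=
  if (∑ i, a i * p i) = b then 0
  else Nat.card {c : ℤ // (∃ q : Fin d → ℤ, (∑ i, a i * q i) = c) ∧
      min (∑ i, a i * p i) b < c ∧ c < max (∑ i, a i * p i) b} + 1

/-- Lattice distance between a rational hyperplane `H ⊆ ℝ^d` (given as a set) and a
lattice point `p`. -/
noncomputable def hyperplaneLatticeDist {d : ℕ} (H : Set (Fin d → ℝ)) (p : Fin d → ℤ) : ℕ :=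
  sInf {n : ℕ | ∃ (a : Fin d → ℤ) (b : ℤ), a ≠ 0 ∧
    H = {x : Fin d → ℝ | (∑ i, (a i : ℝ) * x i) = (b : ℝ)} ∧ n = latticeDistAux a b p}

/-- Lattice distance of a facet `F` to a set `S` of lattice points: the minimum over
`p ∈ S` of the lattice distance between `aff F` and `p`. -/
noncomputable def facetLatticeDistSet {d : ℕ} (F : Set (Fin d → ℝ)) (S : Set (Fin d → ℤ)) : ℕ :=
  sInf {n : ℕ | ∃ p ∈ S, hyperplaneLatticeDist ((affineSpan ℝ F : AffineSubspace ℝ (Fin d → ℝ)) : Set (Fin d → ℝ)) p = n}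

/-- Number of lattice points in the `t`-th dilate of `P`. -/
noncomputable def latCount {d : ℕ} (P : Set (Fin d → ℝ)) (t : ℕ) : ℕ :=
  Nat.card {p : Fin d → ℤ // (fun i => (p i : ℝ)) ∈ (t : ℝ) • P}

/-- `h` is the `h^*`-vector of the `d`-dimensional lattice polytope `P ⊆ ℝ^d`:
the (unique) coefficient vector with
`Ehr_P(z) = (h₀ + h₁ z + … + h_d z^d)/(1-z)^{d+1}`, expressed equivalently by
`L_P(t) = ∑ i, h_i * C(t + d - i, d)` for all `t ≥ 1`. -/
def IsHStarVector {d : ℕ} (P : Set (Fin d → ℝ)) (h : Fin (d + 1) → ℤ) : Prop :=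
  ∀ t : ℕ, 1 ≤ t →
    (latCount P t : ℤ) = ∑ i : Fin (d + 1), h i * (Nat.choose (t + d - (i : ℕ)) d : ℤ)

/-- A finite sequence is *unimodal* if it first weakly increases, then weakly decreases. -/
def Unimodal {n : ℕ} (s : Fin n → ℤ) : Prop :=
  ∃ k : Fin n, (∀ i j : Fin n, i ≤ j → j ≤ k → s i ≤ s j) ∧
    (∀ i j : Fin n, k ≤ i → i ≤ j → s j ≤ s i)

/-- `K` is a triangulation of the lattice polytope `P`, i.e. a triangulation of the
point configuration `P ∩ ℤ^d`: a simplicial complex with vertices among the lattice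
points of `P` covering `P`. -/
def IsTriangulationOf {d : ℕ} (K : Geometry.SimplicialComplex ℝ (Fin d → ℝ))
    (P : Set (Fin d → ℝ)) : Prop :=
  K.space = P ∧ ∀ s ∈ K.faces, ∀ x ∈ s, x ∈ P ∧ IsLatticePt x

/-- The lattice `ℤ^d` inside `ℝ^d`, as a `ℤ`-submodule. -/
def latticeSubmodule (d : ℕ) : Submodule ℤ (Fin d → ℝ) :=
  Submodule.span ℤ (Set.range fun i : Fin d => (Pi.single i 1 : Fin d → ℝ))

/-- A full-dimensional lattice simplex (given by its vertex set `s`, `|s| = d+1`) is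
*unimodular* if the differences of its vertices with one of them form a `ℤ`-basis of
`ℤ^d`, i.e. they span the lattice `ℤ^d` over `ℤ`. -/
def IsUnimodularSimplex {d : ℕ} (s : Finset (Fin d → ℝ)) : Prop :=
  s.card = d + 1 ∧ (∀ x ∈ s, IsLatticePt x) ∧
    ∃ v ∈ s, Submodule.span ℤ ((fun x => x - v) '' (s : Set (Fin d → ℝ))) = latticeSubmodule d

/-- A *unimodular triangulation* of `P`: all full-dimensional simplices are unimodular. -/
def IsUnimodularTriangulation {d : ℕ} (K : Geometry.SimplicialComplex ℝ (Fin d → ℝ))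
    (P : Set (Fin d → ℝ)) : Prop :=
  IsTriangulationOf K P ∧ ∀ s ∈ K.faces, s.card = d + 1 → IsUnimodularSimplex s

/-- The subcomplex of `K` induced on the boundary lattice points `(∂P) ∩ ℤ^d`
(i.e. all faces of `K` whose vertices lie in `∂P`) is a triangulation of `∂P`,
i.e. it covers `∂P`. -/
def BoundaryInducedIsTriangulation {d : ℕ} (K : Geometry.SimplicialComplex ℝ (Fin d → ℝ))
    (P : Set (Fin d → ℝ)) : Prop :=
  (⋃ s ∈ {s ∈ K.faces | ∀ x ∈ s, x ∈ frontier P},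
      convexHull ℝ (s : Set (Fin d → ℝ))) = frontier P

/-- `K` is a *regular* triangulation of `P`: there is a height function `w` on the
lattice points of `P` whose lower convex hull projects to `K`; equivalently every face
of `K` is the domain of equality of an affine functional lying strictly below the lift
of all other lattice points of `P`. -/
def IsRegularTriangulation {d : ℕ} (K : Geometry.SimplicialComplex ℝ (Fin d → ℝ))
    (P : Set (Fin d → ℝ)) : Prop :=
  ∃ w : (Fin d → ℝ) → ℝ, ∀ s ∈ K.faces,
    ∃ ℓ : (Fin d → ℝ) →ᵃ[ℝ] ℝ, (∀ x ∈ s, ℓ x = w x) ∧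
      ∀ x : Fin d → ℝ, IsLatticePt x → x ∈ P → x ∉ s → ℓ x < w x

/-- The union of all alcove hyperplanes in `ℝ^d`. -/
def alcoveUnion (d : ℕ) : Set (Fin d → ℝ) := {y | ∃ H, IsAlcoveHyperplane H ∧ y ∈ H}

/-- The polytope `Q_d = {y ∈ ℝ^d : y_i - y_j ≤ 1 for all 0 ≤ i, j ≤ d}` (with `y₀ = 0`),
the minimal-volume alcoved polytope with the origin in its interior. -/
def Qd (d : ℕ) : Set (Fin d → ℝ) :=
  {y | ∀ i j : Fin (d + 1), extCoord y i - extCoord y j ≤ 1}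

open MeasureTheory

section Helpers
variable {d : ℕ}

noncomputable def gfun (a : Fin d → ℝ) : (Fin d → ℝ) →ₗ[ℝ] ℝ :=
  ∑ i, (a i) • LinearMap.proj i

lemma gfun_apply (a x : Fin d → ℝ) : gfun a x = ∑ i, a i * x i := by simp [gfun]

lemma gfun_ker_finrank (a : Fin d → ℝ) (ha : a ≠ 0) :
    Module.finrank ℝ (LinearMap.ker (gfun a)) = d - 1 := by
  have hsurj : LinearMap.range (gfun a) = ⊤ := by
    rcases Function.ne_iff.1 ha with ⟨i, hi⟩
    refine LinearMap.range_eq_top.2 fun y => ⟨(fun j => if j = i then y / a i else 0), ?_⟩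
    rw [gfun_apply, Finset.sum_eq_single i] <;> simp_all
    field_simp
  have h := LinearMap.finrank_range_add_finrank_ker (gfun a)
  rw [hsurj] at h
  simp [Module.finrank_self] at h
  omega

lemma card_ne_subtype (i₀ : Fin d) : Fintype.card {i : Fin d // i ≠ i₀} = d - 1 := by
  rw [Fintype.card_subtype_compl, Fintype.card_subtype_eq]
  simp

lemma pi_map_ker_top (a : Fin d → ℝ) (ha : a ≠ 0) (i₀ : Fin d) (hi₀ : a i₀ ≠ 0) :
    (LinearMap.ker (gfun a)).map
      (LinearMap.funLeft ℝ ℝ (Subtype.val : {i : Fin d // i ≠ i₀} → Fin d)) = ⊤ := by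
  set π := LinearMap.funLeft ℝ ℝ (Subtype.val : {i : Fin d // i ≠ i₀} → Fin d)
  set W := LinearMap.ker (gfun a)
  have hinj : ∀ x ∈ W, π x = 0 → x = 0 := by
    intro x hx hpx
    have hcoord : ∀ j : Fin d, j ≠ i₀ → x j = 0 := by
      intro j hj
      have := congrFun hpx ⟨j, hj⟩
      simpa [π, LinearMap.funLeft] using this
    have hgx : gfun a x = 0 := hx
    rw [gfun_apply, Finset.sum_eq_single i₀] at hgx
    · have hxi : x i₀ = 0 := by
        rcases mul_eq_zero.1 hgx with h | h
        · exact absurd h hi₀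
        · exact h
      funext j
      by_cases hj : j = i₀
      · rw [hj]; exact hxi
      · exact hcoord j hj
    · intro j _ hj
      rw [hcoord j hj, mul_zero]
    · simp
  have hfr : Module.finrank ℝ (W.map π) = d - 1 := by
    have hkd : LinearMap.ker (π.domRestrict W) = ⊥ := by
      rw [LinearMap.ker_eq_bot']
      intro m hm
      exact Subtype.ext (hinj m.1 m.2 hm)
    have h1 := LinearMap.finrank_range_add_finrank_ker (π.domRestrict W)
    rw [hkd] at h1
    rw [finrank_bot, add_zero] at h1
    rw [LinearMap.range_domRestrict] at h1
    rw [h1, gfun_ker_finrank a ha]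
  apply Submodule.eq_top_of_finrank_eq
  rw [hfr, Module.finrank_pi, card_ne_subtype]

lemma exists_dual_functional (hd : 0 < d) (t : Finset (Fin d → ℝ))
    (h : AffineIndependent ℝ ((↑) : ↑t → (Fin d → ℝ)))
    (hc : t.card = d + 1) (w₀ v : Fin d → ℝ) (hw₀ : w₀ ∈ t) (hv : v ∈ t) (hvw : v ≠ w₀) :
    ∃ φ : (Fin d → ℝ) →ₗ[ℝ] ℝ, (∀ u ∈ t, u ≠ v → φ (u - w₀) = 0) ∧ φ (v - w₀) = 1 := by
  classical
  set i₀ : ↑t := ⟨w₀, hw₀⟩ with hi₀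
  have hli : LinearIndependent ℝ (fun x : {x : ↑t // x ≠ i₀} => ((x : ↑t) : Fin d → ℝ) -ᵥ w₀) :=
    (affineIndependent_iff_linearIndependent_vsub ℝ ((↑) : ↑t → (Fin d → ℝ)) i₀).1 h
  have hcard : Fintype.card {x : ↑t // x ≠ i₀} = Module.finrank ℝ (Fin d → ℝ) := by
    have h1 : Fintype.card {x : ↑t // x ≠ i₀} = Fintype.card ↑t - 1 := by
      rw [Fintype.card_subtype_compl, Fintype.card_subtype_eq]
    rw [h1, Fintype.card_coe, hc]
    simp
  haveI : Nonempty {x : ↑t // x ≠ i₀} := by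
    rw [← Fintype.card_pos_iff, hcard]
    simpa using hd
  let B := basisOfLinearIndependentOfCardEqFinrank hli hcard
  have hB : ∀ x, B x = ((x : ↑t) : Fin d → ℝ) - w₀ := fun x => by
    simp [B, coe_basisOfLinearIndependentOfCardEqFinrank]
  refine ⟨B.coord ⟨⟨v, hv⟩, by simp [hi₀, Subtype.ext_iff, hvw]⟩, ?_, ?_⟩
  · intro u hu huv
    by_cases hu0 : u = w₀
    · simp [hu0]
    · have key : u - w₀ = B ⟨⟨u, hu⟩, by simp [hi₀, Subtype.ext_iff, hu0]⟩ := by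
        rw [hB]
      rw [key, Module.Basis.coord_apply, Module.Basis.repr_self, Finsupp.single_apply, if_neg]
      simp only [ne_eq, Subtype.mk.injEq]
      exact fun h => huv h
  · have key : v - w₀ = B ⟨⟨v, hv⟩, by simp [hi₀, Subtype.ext_iff, hvw]⟩ := by rw [hB]
    rw [key, Module.Basis.coord_apply, Module.Basis.repr_self]
    simp

lemma mem_convexHull_filter (g : (Fin d → ℝ) →ₗ[ℝ] ℝ) (c : ℝ) (t : Finset (Fin d → ℝ))
    (hle : ∀ v ∈ t, g v ≤ c) (x : Fin d → ℝ) (hx : x ∈ convexHull ℝ (t : Set (Fin d → ℝ)))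
    (hxc : g x = c) :
    x ∈ convexHull ℝ ((t.filter (fun v => g v = c) : Finset (Fin d → ℝ)) : Set (Fin d → ℝ)) := by
  classical
  rw [Finset.convexHull_eq] at hx
  obtain ⟨w, hw0, hw1, hcm⟩ := hx
  have hgx : ∑ y ∈ t, w y * g y = c := by
    have : g (t.centerMass w id) = ∑ y ∈ t, w y * g y := by
      rw [Finset.centerMass_eq_of_sum_1 _ _ hw1, map_sum]
      simp [g.map_smul, smul_eq_mul]
    rw [hcm, hxc] at this
    exact this.symm
  have hzero : ∀ y ∈ t, w y * (c - g y) = 0 := by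
    have hsum : ∑ y ∈ t, w y * (c - g y) = 0 := by
      have : ∑ y ∈ t, w y * (c - g y) = (∑ y ∈ t, w y) * c - ∑ y ∈ t, w y * g y := by
        rw [Finset.sum_mul, ← Finset.sum_sub_distrib]
        congr 1
        ext y
        ring
      rw [this, hw1, hgx]
      ring
    exact (Finset.sum_eq_zero_iff_of_nonneg (fun y hy => by
      have := hle y hy
      have := hw0 y hy
      nlinarith)).1 hsum
  have hw0' : ∀ y ∈ t, y ∉ t.filter (fun v => g v = c) → w y = 0 := by
    intro y hy hyf
    have hgy : g y ≠ c := fun h => hyf (Finset.mem_filter.2 ⟨hy, h⟩)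
    rcases mul_eq_zero.1 (hzero y hy) with h | h
    · exact h
    · exfalso; apply hgy; linarith
  rw [Finset.convexHull_eq]
  refine ⟨w, fun y hy => hw0 y (Finset.mem_filter.1 hy).1, ?_, ?_⟩
  · rw [Finset.sum_subset (Finset.filter_subset _ t) (fun y hy hyf => hw0' y hy hyf)]
    exact hw1
  · rw [Finset.centerMass_subset id (Finset.filter_subset _ t) (fun y hy hyf => hw0' y hy hyf)]
    exact hcm

lemma convexHull_null {E : Type*} [NormedAddCommGroup E] [NormedSpace ℝ E] [MeasurableSpace E]
    [BorelSpace E] [FiniteDimensional ℝ E] (u : Finset E) (hcard : u.card ≤ Module.finrank ℝ E)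
    (μ : Measure E) [μ.IsAddHaarMeasure] : μ (convexHull ℝ (u : Set E)) = 0 := by
  rcases Finset.eq_empty_or_nonempty u with rfl | hne
  · simp
  · have hspan : affineSpan ℝ (u : Set E) ≠ ⊤ := by
      intro htop
      have h1 : Module.finrank ℝ (vectorSpan ℝ (u : Set E)) ≤ u.card - 1 := by
        have hcc : Fintype.card ↑u = (u.card - 1) + 1 := by
          simp only [Fintype.card_coe]
          have := Finset.card_pos.2 hne
          omega
        have h3 := finrank_vectorSpan_range_le ℝ ((↑) : ↑u → E) hcc
        rw [← @Subtype.range_coe _ (u : Set E)]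
        exact h3
      have h2 : (affineSpan ℝ (u : Set E)).direction = ⊤ := by
        rw [htop]; exact AffineSubspace.direction_top ℝ E E
      rw [direction_affineSpan] at h2
      rw [h2, finrank_top] at h1
      have := Finset.card_pos.2 hne
      omega
    refine measure_mono_null ?_ (Measure.addHaar_affineSubspace μ _ hspan)
    exact convexHull_subset_affineSpan _

lemma exists_in_open_not_null {E : Type*} [NormedAddCommGroup E] [NormedSpace ℝ E]
    [MeasurableSpace E] [BorelSpace E] (μ : Measure E) [μ.IsAddHaarMeasure] (U N : Set E)
    (hU : IsOpen U) (hne : U.Nonempty) (hN : μ N = 0) : ∃ z ∈ U, z ∉ N := by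
  have hpos : 0 < μ U := hU.measure_pos μ hne
  by_contra h
  push_neg at h
  have := measure_mono (μ := μ) (h : U ⊆ N)
  rw [hN] at this
  exact absurd (le_antisymm this (by simp)) (by simpa using hpos.ne')

lemma latticePts_finite (P : Set (Fin d → ℝ)) (hb : Bornology.IsBounded P) :
    {x : Fin d → ℝ | x ∈ P ∧ IsLatticePt x}.Finite := by
  classical
  obtain ⟨R, hR⟩ := hb.subset_closedBall 0
  set S : Set (Fin d → ℤ) := {p | ∀ i, p i ∈ Set.Icc (-⌈R⌉) ⌈R⌉} with hS
  have hSfin : S.Finite := by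
    have : S = Set.pi Set.univ (fun _ => Set.Icc (-⌈R⌉) ⌈R⌉) := by
      ext p
      simp only [hS, Set.mem_setOf_eq, Set.mem_pi, Set.mem_univ, forall_true_left, true_implies]
    rw [this]
    exact Set.Finite.pi (fun _ => Set.finite_Icc _ _)
  have hsub : {x : Fin d → ℝ | x ∈ P ∧ IsLatticePt x} ⊆
      (fun p : Fin d → ℤ => fun i => (p i : ℝ)) '' S := by
    rintro x ⟨hxP, hxl⟩
    refine ⟨fun i => (hxl i).choose, fun i => ?_, ?_⟩
    · have hxi : x i = ((hxl i).choose : ℝ) := (hxl i).choose_spec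
      have hxb : |x i| ≤ R := by
        have := hR hxP
        simp only [Metric.mem_closedBall, dist_zero_right] at this
        calc |x i| = ‖x i‖ := (Real.norm_eq_abs _).symm
          _ ≤ ‖x‖ := norm_le_pi_norm x i
          _ ≤ R := this
      rw [hxi, ← Int.cast_abs] at hxb
      have h1 : ((|(hxl i).choose| : ℤ) : ℝ) ≤ (⌈R⌉ : ℝ) := le_trans hxb (Int.le_ceil R)
      have h2 : |(hxl i).choose| ≤ ⌈R⌉ := by exact_mod_cast h1
      exact abs_le.1 h2
    · ext i
      exact ((hxl i).choose_spec).symm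
  exact (hSfin.image _).subset hsub

lemma mem_mk'_iff (p : Fin d → ℝ) (W : Submodule ℝ (Fin d → ℝ)) (x : Fin d → ℝ) :
    x ∈ AffineSubspace.mk' p W ↔ x - p ∈ W := by
  constructor
  · intro h; exact AffineSubspace.mem_mk'.1 h
  · intro h; exact AffineSubspace.mem_mk'.2 h

lemma finrank_vectorSpan_finset (t : Finset (Fin d → ℝ))
    (h : AffineIndependent ℝ ((↑) : ↑t → (Fin d → ℝ))) (m : ℕ)
    (hc : t.card = m + 1) : Module.finrank ℝ (vectorSpan ℝ (t : Set (Fin d → ℝ))) = m := by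
  have := h.finrank_vectorSpan (by simpa using hc)
  rw [← @Subtype.range_coe _ (t : Set (Fin d → ℝ))]
  exact this

lemma latticeDistAux_eq_one (a' : Fin d → ℤ) (b' : ℤ) (p : Fin d → ℤ)
    (h : ∑ i, a' i * p i = b' + 1) : latticeDistAux a' b' p = 1 := by
  rw [latticeDistAux, if_neg (by omega)]
  have he : IsEmpty {c : ℤ // (∃ q : Fin d → ℤ, (∑ i, a' i * q i) = c) ∧
      min (∑ i, a' i * p i) b' < c ∧ c < max (∑ i, a' i * p i) b'} := by
    constructor
    rintro ⟨c, -, h1, h2⟩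
    rw [h] at h1 h2
    omega
  rw [Nat.card_of_isEmpty]

end Helpers

set_option maxHeartbeats 1000000 in
/-- If a `d`-dimensional lattice polytope `P ⊆ ℝ^d` with interior
lattice points has a facet at lattice distance at least `2` from the set of interior
lattice points, then `P` admits no unimodular triangulation whose induced subcomplex on
the boundary lattice points triangulates `∂P`. -/
theorem stmt3 (d : ℕ) (P : Set (Fin d → ℝ)) (hP : IsLatticePolytope P) (hdim : IsFullDim P)
    (hint : (interiorLatticePts P).Nonempty)
    (F : Set (Fin d → ℝ)) (hF : IsFacet P F)
    (hFdist : 2 ≤ facetLatticeDistSet F (interiorLatticePts P)) :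
    ¬ ∃ K : Geometry.SimplicialComplex ℝ (Fin d → ℝ),
        IsUnimodularTriangulation K P ∧ BoundaryInducedIsTriangulation K P := by
  classical
  rintro ⟨K, ⟨⟨hspace, hvert⟩, huni⟩, hbd⟩
  obtain ⟨V, hVlat, hPeq⟩ := hP
  have hPconv : Convex ℝ P := by rw [hPeq]; exact convex_convexHull ℝ _
  have hPcompact : IsCompact P := by rw [hPeq]; exact V.finite_toSet.isCompact_convexHull ℝ
  have hPclosed : IsClosed P := hPcompact.isClosed
  have hPbdd : Bornology.IsBounded P := hPcompact.isBounded
  obtain ⟨a, c, ha0, hsupp0, hFeq, hrank⟩ := hF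
  rcases Nat.eq_zero_or_pos d with hd0 | hd
  · apply ha0; subst hd0; funext i; exact i.elim0
  set g := gfun a with hg
  have hgdef : ∀ x, g x = ∑ i, a i * x i := fun x => gfun_apply a x
  have hsupp : ∀ x ∈ P, g x ≤ c := fun x hx => by rw [hgdef]; exact hsupp0 x hx
  have hFeq' : F = {x ∈ P | g x = c} := by
    rw [hFeq]; ext x; simp [hgdef]
  -- F is nonempty
  rcases Set.eq_empty_or_nonempty F with hFemp | ⟨x_F, hx_F⟩
  · -- degenerate case : contradiction via hFdist
    obtain ⟨p, hp⟩ := hint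
    have h0 : hyperplaneLatticeDist
        ((affineSpan ℝ F : AffineSubspace ℝ (Fin d → ℝ)) : Set (Fin d → ℝ)) p = 0 := by
      rw [hyperplaneLatticeDist]
      convert Nat.sInf_empty
      rw [Set.eq_empty_iff_forall_notMem]
      rintro n ⟨a', b', ha', hset, -⟩
      rw [hFemp] at hset
      rw [AffineSubspace.span_empty] at hset
      rw [AffineSubspace.bot_coe] at hset
      rcases Function.ne_iff.1 ha' with ⟨i, hi⟩
      have : (fun j => if j = i then (b' : ℝ) / (a' i : ℝ) else 0) ∈ (∅ : Set (Fin d → ℝ)) := by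
        rw [hset]
        simp only [Set.mem_setOf_eq]
        rw [Finset.sum_eq_single i]
        · rw [if_pos rfl]
          have hi' : ((a' i : ℤ) : ℝ) ≠ 0 := Int.cast_ne_zero.2 hi
          field_simp
        · intro j _ hj; simp [hj]
        · simp
      exact this
    have : facetLatticeDistSet F (interiorLatticePts P) ≤ 0 :=
      Nat.sInf_le ⟨p, hp, h0⟩
    omega
  have hx_FP : x_F ∈ P := by rw [hFeq'] at hx_F; exact hx_F.1
  have hx_Fc : g x_F = c := by rw [hFeq'] at hx_F; exact hx_F.2
  -- F inside the frontier
  have hFP : F ⊆ P := by rw [hFeq']; exact fun x hx => hx.1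
  have hsumsq : 0 < ∑ i, a i * a i := by
    rcases Function.ne_iff.1 ha0 with ⟨i, hi⟩
    apply Finset.sum_pos' (fun j _ => mul_self_nonneg _)
    exact ⟨i, Finset.mem_univ i, mul_self_pos.2 hi⟩
  have hFfr : F ⊆ frontier P := by
    intro x hx
    rw [hFeq'] at hx
    obtain ⟨hxP, hxc⟩ := hx
    rw [hPclosed.frontier_eq]
    refine ⟨hxP, fun hxint => ?_⟩
    obtain ⟨ε, hε, hball⟩ := Metric.isOpen_iff.1 isOpen_interior x hxint
    set δ := ε / (2 * (‖a‖ + 1)) with hδdef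
    have hnorm : 0 ≤ ‖a‖ := norm_nonneg a
    have hδ : 0 < δ := by positivity
    have hmem : x + δ • a ∈ P := by
      apply interior_subset
      apply hball
      rw [Metric.mem_ball, dist_eq_norm, add_sub_cancel_left, norm_smul, Real.norm_eq_abs,
        abs_of_pos hδ]
      have h1 : δ * ‖a‖ < δ * (‖a‖ + 1) := by nlinarith
      have h2 : δ * (‖a‖ + 1) = ε / 2 := by
        rw [hδdef]; field_simp
      nlinarith
    have hval := hsupp _ hmem
    rw [map_add, hxc, g.map_smul, smul_eq_mul, hgdef a] at hval
    nlinarith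
  -- interior of frontier is empty
  have hfrint : interior (frontier P) = ∅ := by
    rw [Set.eq_empty_iff_forall_notMem]
    intro q hq
    have h1 : q ∈ interior P := interior_mono (hPclosed.frontier_subset) hq
    have h2 : q ∈ frontier P := interior_subset hq
    rw [hPclosed.frontier_eq] at h2
    exact h2.2 h1
  -- affineSpan F = mk' x_F (ker g)
  have hWfr : Module.finrank ℝ (LinearMap.ker g) = d - 1 := gfun_ker_finrank a ha0
  have hle1 : affineSpan ℝ F ≤ AffineSubspace.mk' x_F (LinearMap.ker g) := by
    rw [affineSpan_le]
    intro x hx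
    rw [hFeq'] at hx
    show x ∈ AffineSubspace.mk' x_F (LinearMap.ker g)
    rw [mem_mk'_iff, LinearMap.mem_ker, map_sub, hx.2, hx_Fc, sub_self]
  have hspanF : affineSpan ℝ F = AffineSubspace.mk' x_F (LinearMap.ker g) := by
    refine AffineSubspace.ext_of_direction_eq ?_
      ⟨x_F, mem_affineSpan ℝ hx_F, AffineSubspace.self_mem_mk' _ _⟩
    refine Submodule.eq_of_le_of_finrank_eq (AffineSubspace.direction_le hle1) ?_
    rw [hrank, AffineSubspace.direction_mk', hWfr]
  -- projection
  obtain ⟨i₀, hi₀⟩ := Function.ne_iff.1 ha0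
  set π := LinearMap.funLeft ℝ ℝ (Subtype.val : {i : Fin d // i ≠ i₀} → Fin d) with hπ
  have hFconv : Convex ℝ F := by
    rw [hFeq']
    have : {x | x ∈ P ∧ g x = c} = P ∩ {x | g x = c} := by ext x; simp [Set.mem_inter_iff]
    rw [this]
    exact hPconv.inter (convex_hyperplane g.isLinear c)
  have hπF : affineSpan ℝ (π '' F) = ⊤ := by
    have h1 : affineSpan ℝ (π '' F) = (affineSpan ℝ F).map π.toAffineMap := by
      rw [AffineSubspace.map_span]
      rfl
    rw [h1, hspanF]
    have hne : (((AffineSubspace.mk' x_F (LinearMap.ker g)).map π.toAffineMap :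
        AffineSubspace ℝ ({i : Fin d // i ≠ i₀} → ℝ)) : Set ({i : Fin d // i ≠ i₀} → ℝ)).Nonempty :=
      ⟨π x_F, ⟨x_F, AffineSubspace.self_mem_mk' _ _, rfl⟩⟩
    rw [← AffineSubspace.direction_eq_top_iff_of_nonempty hne]
    rw [AffineSubspace.map_direction, AffineSubspace.direction_mk']
    exact pi_map_ker_top a ha0 i₀ hi₀
  have hUne : (interior (π '' F)).Nonempty := by
    rw [Convex.interior_nonempty_iff_affineSpan_eq_top (hFconv.linear_image π)]
    exact hπF
  -- finiteness of faces
  have hAfin := latticePts_finite P hPbdd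
  have hfacesfin : K.faces.Finite := by
    have hsub : K.faces ⊆ (fun s : Finset (Fin d → ℝ) => (s : Set (Fin d → ℝ))) ⁻¹' {b | b ⊆ {x | x ∈ P ∧ IsLatticePt x}} := by
      intro s hs x hx
      exact ⟨(hvert s hs x hx).1, (hvert s hs x hx).2⟩
    exact (hAfin.finite_subsets.preimage (Set.injOn_of_injective Finset.coe_injective)).subset hsub
  -- null sets in the hyperplane coordinates
  have hcodfr : Module.finrank ℝ ({i : Fin d // i ≠ i₀} → ℝ) = d - 1 := by
    rw [Module.finrank_pi, card_ne_subtype]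
  set bad : Set (Finset (Fin d → ℝ)) := {u ∈ K.faces | u.card ≤ d - 1} with hbad
  set N : Set ({i : Fin d // i ≠ i₀} → ℝ) := ⋃ u ∈ bad, π '' (convexHull ℝ (u : Set (Fin d → ℝ))) with hN
  have hNnull : volume N = 0 := by
    rw [hN, measure_biUnion_null_iff ((hfacesfin.subset (fun u hu => hu.1)).countable)]
    intro u hu
    have himg : π '' (convexHull ℝ (u : Set (Fin d → ℝ))) =
        convexHull ℝ ((u.image π : Finset ({i : Fin d // i ≠ i₀} → ℝ)) : Set _) := by
      rw [Finset.coe_image, π.image_convexHull]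
    rw [himg]
    apply convexHull_null
    rw [hcodfr]
    exact le_trans (Finset.card_image_le) hu.2
  obtain ⟨z, hzU, hzN⟩ := exists_in_open_not_null volume (interior (π '' F)) N
    isOpen_interior hUne hNnull
  obtain ⟨x₀, hx₀F, hx₀z⟩ := interior_subset hzU
  have hx₀gen : ∀ u ∈ K.faces, u.card ≤ d - 1 →
      x₀ ∉ convexHull ℝ (u : Set (Fin d → ℝ)) := by
    intro u hu hcard hxmem
    exact hzN (Set.mem_biUnion (⟨hu, hcard⟩ : u ∈ bad) ⟨x₀, hxmem, hx₀z⟩)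
  -- interior point and the full-dimensional simplex t through x₀
  obtain ⟨y, hy⟩ := hdim
  set M : Set (Fin d → ℝ) := ⋃ u ∈ {u ∈ K.faces | u.card ≤ d}, convexHull ℝ (u : Set (Fin d → ℝ))
    with hM
  have hMnull : volume M = 0 := by
    rw [hM, measure_biUnion_null_iff ((hfacesfin.subset (fun u hu => hu.1)).countable)]
    intro u hu
    apply convexHull_null
    rw [Module.finrank_pi]
    simpa using hu.2
  have hseq : ∀ n : ℕ, ∃ w : Fin d → ℝ, w ∉ M ∧ w ∈ interior P ∧
      dist w x₀ ≤ (dist y x₀ + 1) / (n + 1) := by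
    intro n
    set α : ℝ := 1 / (n + 1) with hα
    have hα0 : 0 < α := by positivity
    have hα1 : α ≤ 1 := by
      rw [hα, div_le_one (by positivity)]
      linarith [Nat.cast_nonneg (α := ℝ) n]
    set zn := α • y + (1 - α) • x₀ with hzn
    have hznP : zn ∈ interior P :=
      hPconv.combo_interior_closure_mem_interior hy
        (subset_closure (hFP hx₀F)) hα0 (by linarith) (by ring)
    obtain ⟨r, hr, hball⟩ := Metric.isOpen_iff.1 isOpen_interior zn hznP
    set r' := min r α with hr'
    have hr'0 : 0 < r' := lt_min hr hα0
    obtain ⟨w, hwball, hwM⟩ := exists_in_open_not_null volume (Metric.ball zn r') M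
      Metric.isOpen_ball ⟨zn, Metric.mem_ball_self hr'0⟩ hMnull
    refine ⟨w, hwM, hball (Metric.ball_subset_ball (min_le_left _ _) hwball), ?_⟩
    have hd1 : dist w zn < r' := Metric.mem_ball.1 hwball
    have hd2 : dist zn x₀ = α * dist y x₀ := by
      rw [dist_eq_norm, dist_eq_norm, hzn]
      have : α • y + (1 - α) • x₀ - x₀ = α • (y - x₀) := by
        rw [smul_sub]
        module
      rw [this, norm_smul, Real.norm_eq_abs, abs_of_pos hα0]
    calc dist w x₀ ≤ dist w zn + dist zn x₀ := dist_triangle _ _ _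
      _ ≤ α + α * dist y x₀ := by
          have := min_le_right r α
          rw [hd2]
          linarith
      _ = (dist y x₀ + 1) * α := by ring
      _ = (dist y x₀ + 1) / (n + 1) := by rw [hα]; ring
  choose w hwM hwint hwdist using hseq
  have hwface : ∀ n, ∃ s ∈ K.faces, w n ∈ convexHull ℝ (s : Set (Fin d → ℝ)) := by
    intro n
    have hmem : w n ∈ K.space := by rw [hspace]; exact interior_subset (hwint n)
    exact Geometry.SimplicialComplex.mem_space_iff.1 hmem
  choose tfun htfaces htmem using hwface
  haveI : Finite ↥K.faces := hfacesfin.to_subtype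
  obtain ⟨⟨t, htK⟩, hfib⟩ :=
    Finite.exists_infinite_fiber (fun n => (⟨tfun n, htfaces n⟩ : ↥K.faces))
  have hfib' : {n | tfun n = t}.Infinite := by
    have h1 : ((fun n => (⟨tfun n, htfaces n⟩ : ↥K.faces)) ⁻¹' {⟨t, htK⟩}).Infinite :=
      Set.infinite_coe_iff.1 hfib
    refine h1.mono ?_
    intro n hn
    simp only [Set.mem_preimage, Set.mem_singleton_iff] at hn
    exact congrArg Subtype.val hn
  obtain ⟨n₀, hn₀⟩ := hfib'.nonempty
  have htcard : t.card = d + 1 := by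
    have h1 : ¬ t.card ≤ d := by
      intro hle
      apply hwM n₀
      rw [hM]
      refine Set.mem_biUnion (⟨htK, hle⟩ : t ∈ {u ∈ K.faces | u.card ≤ d}) ?_
      rw [← hn₀]
      exact htmem n₀
    have h2 : t.card ≤ d + 1 := by
      have h3 := (K.indep htK).card_le_finrank_succ
      rw [Fintype.card_coe] at h3
      have h4 : Module.finrank ℝ (vectorSpan ℝ (Set.range ((↑) : ↑t → (Fin d → ℝ)))) ≤ d := by
        have h5 : Module.finrank ℝ (vectorSpan ℝ (Set.range ((↑) : ↑t → (Fin d → ℝ)))) ≤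
            Module.finrank ℝ (Fin d → ℝ) := Submodule.finrank_le _
        rwa [Module.finrank_pi, Fintype.card_fin] at h5
      omega
    omega
  have hx₀t : x₀ ∈ convexHull ℝ (t : Set (Fin d → ℝ)) := by
    have hcl : IsClosed (convexHull ℝ (t : Set (Fin d → ℝ))) := t.finite_toSet.isClosed_convexHull ℝ
    rw [← hcl.closure_eq, Metric.mem_closure_iff]
    intro ε hε
    obtain ⟨Nn, hNn⟩ := exists_nat_gt ((dist y x₀ + 1) / ε)
    obtain ⟨n, hnfib, hn⟩ := hfib'.exists_gt Nn
    refine ⟨w n, ?_, ?_⟩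
    · rw [← (hnfib : tfun n = t)]
      exact htmem n
    · have h1 := hwdist n
      have h2 : (dist y x₀ + 1) / (n + 1 : ℝ) < ε := by
        rw [div_lt_iff₀ (by positivity)]
        have h3 : (dist y x₀ + 1) / ε < Nn := hNn
        rw [div_lt_iff₀ hε] at h3
        have h4 : (Nn : ℝ) < n + 1 := by
          have : (Nn : ℝ) < n := by exact_mod_cast hn
          linarith
        nlinarith [dist_nonneg (x := y) (y := x₀)]
      rw [dist_comm]
      linarith
  -- the facet simplex s₀ and apex v
  set s₀ := t.filter (fun v => g v = c) with hs₀def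
  have hx₀c : g x₀ = c := by rw [hFeq'] at hx₀F; exact hx₀F.2
  have hx₀s₀ : x₀ ∈ convexHull ℝ (s₀ : Set (Fin d → ℝ)) :=
    mem_convexHull_filter g c t (fun v hv => hsupp v (hvert t htK v hv).1) x₀ hx₀t hx₀c
  have hs₀ne : s₀.Nonempty := by
    rcases Finset.eq_empty_or_nonempty s₀ with h | h
    · rw [h] at hx₀s₀; simp at hx₀s₀
    · exact h
  have hs₀face : s₀ ∈ K.faces :=
    K.down_closed htK (Finset.filter_subset _ _) hs₀ne
  have hs₀sub : (s₀ : Set (Fin d → ℝ)) ⊆ F := by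
    intro x hx
    rw [hFeq']
    rw [Finset.mem_coe, hs₀def, Finset.mem_filter] at hx
    exact ⟨(hvert t htK x hx.1).1, hx.2⟩
  have hs₀le : s₀.card ≤ d := by
    have hvs : vectorSpan ℝ (s₀ : Set (Fin d → ℝ)) ≤ LinearMap.ker g := by
      rw [vectorSpan_def]
      apply Submodule.span_le.2
      rintro δ' ⟨x, hx, y', hy', rfl⟩
      rw [Finset.mem_coe, hs₀def, Finset.mem_filter] at hx hy'
      rw [SetLike.mem_coe, LinearMap.mem_ker]
      show g (x - y') = 0
      rw [map_sub, hx.2, hy'.2, sub_self]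
    have h1 : Module.finrank ℝ (vectorSpan ℝ (s₀ : Set (Fin d → ℝ))) ≤ d - 1 :=
      le_trans (Submodule.finrank_mono hvs) (le_of_eq hWfr)
    have h2 : Module.finrank ℝ (vectorSpan ℝ (s₀ : Set (Fin d → ℝ))) = s₀.card - 1 := by
      apply finrank_vectorSpan_finset s₀ (K.indep hs₀face)
      have := Finset.card_pos.2 hs₀ne
      omega
    have := Finset.card_pos.2 hs₀ne
    omega
  have hs₀ge : d ≤ s₀.card := by
    by_contra hlt
    push_neg at hlt
    exact hx₀gen s₀ hs₀face (by omega) hx₀s₀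
  have hs₀card : s₀.card = d := le_antisymm hs₀le hs₀ge
  obtain ⟨v, hvt, hvs₀⟩ : ∃ v, v ∈ t ∧ v ∉ s₀ := by
    have hss : s₀ ⊂ t := Finset.ssubset_iff_of_subset (Finset.filter_subset _ _) |>.2 ?_
    · obtain ⟨v, hv1, hv2⟩ := Finset.exists_of_ssubset hss
      exact ⟨v, hv1, hv2⟩
    · by_contra hno
      push_neg at hno
      have : t ⊆ s₀ := fun x hx => by
        by_contra hxs
        exact hxs (by
          have := hno x hx
          exact this)
      have := Finset.card_le_card this
      omega
  have htins : ∀ u ∈ t, u ≠ v → u ∈ s₀ := by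
    have hsub : insert v s₀ ⊆ t := Finset.insert_subset hvt (Finset.filter_subset _ _)
    have hcard : t.card ≤ (insert v s₀).card := by
      rw [Finset.card_insert_of_notMem hvs₀, hs₀card, htcard]
    have heq : insert v s₀ = t := Finset.eq_of_subset_of_card_le hsub hcard
    intro u hu huv
    rw [← heq] at hu
    rcases Finset.mem_insert.1 hu with h | h
    · exact absurd h huv
    · exact h
  -- unimodularity and the dual functional
  obtain ⟨-, hlat, v₀, hv₀t, hspanZ⟩ := huni t htK htcard
  obtain ⟨w₀, hw₀s₀⟩ := hs₀ne
  have hw₀t : w₀ ∈ t := Finset.filter_subset _ _ hw₀s₀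
  have hvw : v ≠ w₀ := fun h => hvs₀ (h ▸ hw₀s₀)
  obtain ⟨φ, hφ0, hφ1⟩ := exists_dual_functional hd t (K.indep htK) htcard w₀ v hw₀t hvt hvw
  -- φ is integer-valued on the lattice
  set Zsub : Submodule ℤ ℝ := Submodule.span ℤ {(1 : ℝ)} with hZsub
  have hone : (1 : ℝ) ∈ Zsub := Submodule.subset_span rfl
  have hφZ : ∀ x ∈ t, φ (x - w₀) ∈ Zsub := by
    intro x hxt
    by_cases hxv : x = v
    · rw [hxv, hφ1]; exact hone
    · rw [hφ0 x hxt hxv]; exact Submodule.zero_mem _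
  have hint' : ∀ i : Fin d, φ (Pi.single i 1) ∈ Zsub := by
    have hsubT : ((fun x => x - v₀) '' (t : Set (Fin d → ℝ))) ⊆
        (Zsub.comap (φ.restrictScalars ℤ) : Set (Fin d → ℝ)) := by
      rintro _ ⟨x, hxt, rfl⟩
      show φ (x - v₀) ∈ Zsub
      have hxx : x - v₀ = (x - w₀) - (v₀ - w₀) := by abel
      rw [hxx, map_sub]
      exact Submodule.sub_mem _ (hφZ x hxt) (hφZ v₀ hv₀t)
    have hle := Submodule.span_le.2 hsubT
    rw [hspanZ] at hle
    intro i
    have hmem : (Pi.single i 1 : Fin d → ℝ) ∈ latticeSubmodule d :=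
      Submodule.subset_span ⟨i, rfl⟩
    exact hle hmem
  have hint'' : ∀ i : Fin d, ∃ n : ℤ, φ (Pi.single i 1) = (n : ℝ) := by
    intro i
    obtain ⟨n, hn⟩ := Submodule.mem_span_singleton.1 (hint' i)
    exact ⟨n, by rw [← hn]; simp⟩
  choose a' ha' using hint''
  have hφx : ∀ x : Fin d → ℝ, φ x = ∑ i, (a' i : ℝ) * x i := by
    intro x
    rw [LinearMap.pi_apply_eq_sum_univ φ x]
    refine Finset.sum_congr rfl (fun i _ => ?_)
    have hsingle : (fun j => if i = j then (1:ℝ) else 0) = Pi.single i 1 := by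
      funext j
      rw [Pi.single_apply]
      simp [eq_comm]
    rw [hsingle, ha', smul_eq_mul, mul_comm]
  have ha'0 : a' ≠ 0 := by
    intro h0
    have hz : φ (v - w₀) = 0 := by
      rw [hφx]
      simp [h0]
    rw [hφ1] at hz
    exact one_ne_zero hz
  -- b'
  have hw₀lat : IsLatticePt w₀ := (hvert t htK w₀ hw₀t).2
  choose w₀i hw₀i using hw₀lat
  set b' : ℤ := ∑ i, a' i * w₀i i with hb'
  have hφw₀ : φ w₀ = (b' : ℝ) := by
    rw [hφx, hb']
    push_cast
    refine Finset.sum_congr rfl (fun i _ => ?_)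
    rw [hw₀i]
  -- affineSpan F as the hyperplane of φ
  have ha''0 : (fun i => (a' i : ℝ)) ≠ 0 := by
    intro h0
    apply ha'0
    funext i
    show a' i = 0
    have h2 : ((a' i : ℤ) : ℝ) = 0 := by simpa using congrFun h0 i
    exact_mod_cast h2
  have hφg : φ = gfun (fun i => (a' i : ℝ)) := by
    apply LinearMap.ext
    intro x
    rw [hφx, gfun_apply]
  have hkerφ : Module.finrank ℝ (LinearMap.ker φ) = d - 1 := by
    rw [hφg]
    exact gfun_ker_finrank _ ha''0
  have hfrs₀ : Module.finrank ℝ (vectorSpan ℝ (s₀ : Set (Fin d → ℝ))) = d - 1 := by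
    apply finrank_vectorSpan_finset s₀ (K.indep hs₀face)
    omega
  have hw₀mem : w₀ ∈ (s₀ : Set (Fin d → ℝ)) := hw₀s₀
  have heq1 : affineSpan ℝ (s₀ : Set (Fin d → ℝ)) = affineSpan ℝ F := by
    refine AffineSubspace.ext_of_direction_eq ?_
      ⟨w₀, mem_affineSpan ℝ hw₀mem, affineSpan_mono ℝ hs₀sub (mem_affineSpan ℝ hw₀mem)⟩
    refine Submodule.eq_of_le_of_finrank_eq
      (AffineSubspace.direction_le (affineSpan_mono ℝ hs₀sub)) ?_
    rw [hrank, direction_affineSpan, hfrs₀]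
  have hle2 : affineSpan ℝ (s₀ : Set (Fin d → ℝ)) ≤ AffineSubspace.mk' w₀ (LinearMap.ker φ) := by
    rw [affineSpan_le]
    intro x hx
    rw [Finset.mem_coe, hs₀def, Finset.mem_filter] at hx
    show x ∈ AffineSubspace.mk' w₀ (LinearMap.ker φ)
    rw [mem_mk'_iff, LinearMap.mem_ker]
    apply hφ0 x hx.1
    intro hxv
    rw [hxv] at hx
    exact hvs₀ (Finset.mem_filter.2 hx)
  have heq2 : affineSpan ℝ (s₀ : Set (Fin d → ℝ)) = AffineSubspace.mk' w₀ (LinearMap.ker φ) := by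
    refine AffineSubspace.ext_of_direction_eq ?_
      ⟨w₀, mem_affineSpan ℝ hw₀mem, AffineSubspace.self_mem_mk' _ _⟩
    refine Submodule.eq_of_le_of_finrank_eq (AffineSubspace.direction_le hle2) ?_
    rw [direction_affineSpan, hfrs₀, AffineSubspace.direction_mk', hkerφ]
  have hFset : ((affineSpan ℝ F : AffineSubspace ℝ (Fin d → ℝ)) : Set (Fin d → ℝ)) =
      {x : Fin d → ℝ | (∑ i, ((a' i : ℤ) : ℝ) * x i) = ((b' : ℤ) : ℝ)} := by
    rw [← heq1, heq2]
    ext x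
    rw [SetLike.mem_coe, mem_mk'_iff, LinearMap.mem_ker, map_sub, sub_eq_zero, hφw₀]
    rw [Set.mem_setOf_eq, ← hφx]
  -- the two cases for v
  have hvP : v ∈ P := (hvert t htK v hvt).1
  have hvlat : IsLatticePt v := (hvert t htK v hvt).2
  choose vInt hvInt using hvlat
  by_cases hvint : v ∈ interior P
  · -- v is an interior lattice point at lattice distance 1 : contradiction with hFdist
    have hmemS : vInt ∈ interiorLatticePts P := by
      show (fun i => (vInt i : ℝ)) ∈ interior P
      have : (fun i => (vInt i : ℝ)) = v := by
        funext i
        exact (hvInt i).symm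
      rw [this]
      exact hvint
    have hsum : ∑ i, a' i * vInt i = b' + 1 := by
      have h1 : ((∑ i, a' i * vInt i : ℤ) : ℝ) = φ v := by
        push_cast
        rw [hφx]
        refine Finset.sum_congr rfl (fun i _ => ?_)
        rw [hvInt]
      have h2 : φ v = (b' : ℝ) + 1 := by
        have h3 := hφ1
        rw [map_sub, hφw₀] at h3
        linarith
      have h4 : ((∑ i, a' i * vInt i : ℤ) : ℝ) = ((b' + 1 : ℤ) : ℝ) := by
        rw [h1, h2]; push_cast; ring
      exact_mod_cast h4
    have hdist1 : latticeDistAux a' b' vInt = 1 := latticeDistAux_eq_one a' b' vInt hsum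
    have hhyp_le : hyperplaneLatticeDist
        ((affineSpan ℝ F : AffineSubspace ℝ (Fin d → ℝ)) : Set (Fin d → ℝ)) vInt ≤ 1 :=
      Nat.sInf_le ⟨a', b', ha'0, hFset, hdist1.symm⟩
    have hfacet_le : facetLatticeDistSet F (interiorLatticePts P) ≤
        hyperplaneLatticeDist
          ((affineSpan ℝ F : AffineSubspace ℝ (Fin d → ℝ)) : Set (Fin d → ℝ)) vInt :=
      Nat.sInf_le ⟨vInt, hmemS, rfl⟩
    omega
  · -- v is on the boundary : t is a boundary simplex, contradiction with full-dimensionality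
    have hvfr : v ∈ frontier P := by
      rw [hPclosed.frontier_eq]
      exact ⟨hvP, hvint⟩
    have htb : ∀ x ∈ t, x ∈ frontier P := by
      intro x hx
      by_cases hxv : x = v
      · rw [hxv]; exact hvfr
      · exact hFfr (hs₀sub (htins x hx hxv))
    have hsubfr : convexHull ℝ (t : Set (Fin d → ℝ)) ⊆ frontier P := by
      rw [← hbd]
      intro q hq
      exact Set.mem_biUnion
        (show t ∈ {s | s ∈ K.faces ∧ ∀ x ∈ s, x ∈ frontier P} from ⟨htK, htb⟩) hq
    have hit : (interior (convexHull ℝ (t : Set (Fin d → ℝ)))).Nonempty := by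
      rw [Convex.interior_nonempty_iff_affineSpan_eq_top (convex_convexHull ℝ _)]
      rw [affineSpan_convexHull]
      rw [AffineSubspace.affineSpan_eq_top_iff_vectorSpan_eq_top_of_nonempty ℝ (Fin d → ℝ) (Fin d → ℝ)
        (⟨w₀, hw₀t⟩ : (t : Set (Fin d → ℝ)).Nonempty)]
      apply Submodule.eq_top_of_finrank_eq
      rw [finrank_vectorSpan_finset t (K.indep htK) d htcard, Module.finrank_pi, Fintype.card_fin]
    obtain ⟨q, hq⟩ := hit
    have hqq : q ∈ interior (frontier P) := interior_mono hsubfr hq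
    rw [hfrint] at hqq
    exact hqq
end

section
/- Let d ≥ 2 and let P be a d-dimensional alcoved polytope in ℝ^d with at least one interior lattice point. Then every facet of P has lattice distance at most d − 1 to the set of interior lattice points of P. -/
open scoped BigOperators Pointwise

namespace S4
open Module

variable {d : ℕ}

noncomputable def dl (a : Fin d → ℝ) : (Fin d → ℝ) →ₗ[ℝ] ℝ where
  toFun x := ∑ i, a i * x i
  map_add' x y := by simp [mul_add, Finset.sum_add_distrib]
  map_smul' c x := by simp [Finset.mul_sum, mul_left_comm]

lemma dl_apply (a x : Fin d → ℝ) : dl a x = ∑ i, a i * x i := rfl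

lemma dl_comm (a x : Fin d → ℝ) : dl a x = dl x a := by
  simp [dl_apply, mul_comm]

lemma dl_add_left (a b x : Fin d → ℝ) : dl (a + b) x = dl a x + dl b x := by
  simp [dl_apply, add_mul, Finset.sum_add_distrib]

lemma dl_sub_left (a b x : Fin d → ℝ) : dl (a - b) x = dl a x - dl b x := by
  simp [dl_apply, sub_mul, Finset.sum_sub_distrib]

lemma dl_smul_left (c : ℝ) (a x : Fin d → ℝ) : dl (c • a) x = c * dl a x := by
  simp [dl_apply, Finset.mul_sum, mul_assoc]

lemma dl_neg_left (a x : Fin d → ℝ) : dl (-a) x = - dl a x := by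
  simp [dl_apply, Finset.sum_neg_distrib]

lemma dl_zero_left (x : Fin d → ℝ) : dl (0 : Fin d → ℝ) x = 0 := by simp [dl_apply]

lemma dl_self_nonneg (a : Fin d → ℝ) : 0 ≤ dl a a := by
  rw [dl_apply]; exact Finset.sum_nonneg fun i _ => mul_self_nonneg _

lemma dl_self_pos {a : Fin d → ℝ} (ha : a ≠ 0) : 0 < dl a a := by
  rcases Function.ne_iff.1 ha with ⟨i, hi⟩
  rw [dl_apply]
  exact Finset.sum_pos' (fun j _ => mul_self_nonneg _)
    ⟨i, Finset.mem_univ i, mul_self_pos.2 hi⟩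

noncomputable def vecN (d : ℕ) : Fin (d + 1) → Fin d → ℝ :=
  Fin.cons 0 fun t => Pi.single t 1

lemma ext_eq_dl (y : Fin d → ℝ) (u : Fin (d + 1)) : extCoord y u = dl (vecN d u) y := by
  induction u using Fin.cases with
  | zero => simp [extCoord, vecN, dl_apply]
  | succ t =>
      simp only [extCoord, vecN, Fin.cons_succ, dl_apply, Pi.single_apply]
      simp [ite_mul, Finset.sum_ite_eq']

noncomputable def fvec (d : ℕ) (u v : Fin (d + 1)) : Fin d → ℝ := vecN d u - vecN d v

lemma dl_fvec (u v : Fin (d + 1)) (y : Fin d → ℝ) :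
    dl (fvec d u v) y = extCoord y u - extCoord y v := by
  rw [ext_eq_dl, ext_eq_dl, fvec, dl_sub_left]

lemma vecN_inj : Function.Injective (vecN d) := by
  intro u v h
  induction u using Fin.cases with
  | zero =>
      induction v using Fin.cases with
      | zero => rfl
      | succ t =>
          exfalso
          have := congrFun h t
          simp [vecN] at this
  | succ s =>
      induction v using Fin.cases with
      | zero =>
          exfalso
          have := congrFun h s
          simp [vecN] at this
      | succ t =>
          have := congrFun h s
          simp [vecN, Pi.single_apply] at this
          by_contra hne
          have hst : s ≠ t := fun hh => hne (congrArg Fin.succ hh)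
          exact hst this

lemma fvec_ne_zero {u v : Fin (d + 1)} (h : u ≠ v) : fvec d u v ≠ 0 := by
  intro hz
  exact h (vecN_inj (sub_eq_zero.1 hz))

lemma finrank_pi_real : finrank ℝ (Fin d → ℝ) = d := by simp

lemma surj_dl {a : Fin d → ℝ} (ha : a ≠ 0) : Function.Surjective (dl a) := by
  intro c
  refine ⟨(c / dl a a) • a, ?_⟩
  rw [map_smul, smul_eq_mul]
  field_simp [ne_of_gt (dl_self_pos ha)]

lemma finrank_ker_dl {a : Fin d → ℝ} (ha : a ≠ 0) :
    finrank ℝ (LinearMap.ker (dl a)) = d - 1 := by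
  have h := LinearMap.finrank_range_add_finrank_ker (dl a)
  rw [LinearMap.range_eq_top.2 (surj_dl ha), finrank_top, finrank_pi_real] at h
  simp at h
  omega

section Hull
variable (V : Finset (Fin d → ℝ)) (hV : V.Nonempty)

noncomputable def MV (a : Fin d → ℝ) : ℝ := V.sup' hV (fun v => dl a v)

lemma le_MV {a x : Fin d → ℝ} (hx : x ∈ convexHull ℝ (V : Set (Fin d → ℝ))) :
    dl a x ≤ MV V hV a := by
  have hsub : (V : Set (Fin d → ℝ)) ⊆ {y | dl a y ≤ MV V hV a} :=
    fun v hv => Finset.le_sup' (fun v => dl a v) hv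
  exact convexHull_min hsub (convex_halfSpace_le (dl a).isLinear _) hx

lemma exists_MV (a : Fin d → ℝ) : ∃ v ∈ V, dl a v = MV V hV a := by
  obtain ⟨v, hv, hve⟩ := Finset.exists_mem_eq_sup' hV (fun v => dl a v)
  exact ⟨v, hv, hve.symm⟩

lemma interior_lt {a x : Fin d → ℝ} (ha : a ≠ 0)
    (hx : x ∈ interior (convexHull ℝ (V : Set (Fin d → ℝ)))) :
    dl a x < MV V hV a := by
  obtain ⟨ε, hε, hball⟩ := Metric.isOpen_iff.1 isOpen_interior x hx
  set δ : ℝ := ε / (2 * (‖a‖ + 1)) with hδ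
  have hδpos : 0 < δ := by positivity
  have hmem : x + δ • a ∈ convexHull ℝ (V : Set (Fin d → ℝ)) := by
    apply interior_subset
    apply hball
    rw [Metric.mem_ball, dist_eq_norm]
    have : x + δ • a - x = δ • a := by abel
    rw [this, norm_smul, Real.norm_eq_abs, abs_of_pos hδpos]
    calc δ * ‖a‖ ≤ δ * (‖a‖ + 1) := by nlinarith [norm_nonneg a]
    _ < ε := by rw [hδ]; rw [div_mul_eq_mul_div]; rw [div_lt_iff₀ (by positivity)]; nlinarith [norm_nonneg a]
  have h2 := le_MV V hV (a := a) hmem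
  have : dl a (x + δ • a) = dl a x + δ * dl a a := by
    rw [map_add, map_smul]; rfl
  rw [this] at h2
  nlinarith [dl_self_pos ha, hδpos]

end Hull

section Facet
variable {V : Finset (Fin d → ℝ)}

noncomputable def dlB : (Fin d → ℝ) →ₗ[ℝ] (Fin d → ℝ) →ₗ[ℝ] ℝ where
  toFun a := dl a
  map_add' a b := by ext x; simp [dl_add_left]
  map_smul' c a := by ext x; simp [dl_smul_left]

lemma exists_ann (B : Submodule ℝ (Fin d → ℝ)) (hB : finrank ℝ B < d) :
    ∃ h : Fin d → ℝ, h ≠ 0 ∧ ∀ b ∈ B, dl h b = 0 := by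
  classical
  let Θ : (Fin d → ℝ) →ₗ[ℝ] (B →ₗ[ℝ] ℝ) :=
    { toFun := fun x => (dlB x) ∘ₗ B.subtype
      map_add' := by intro x y; ext b; simp
      map_smul' := by intro c x; ext b; simp }
  have hcod : finrank ℝ (B →ₗ[ℝ] ℝ) = finrank ℝ B := by
    rw [Module.finrank_linearMap, Module.finrank_self, mul_one]
  have hrange : finrank ℝ (LinearMap.range Θ) ≤ finrank ℝ B := by
    rw [← hcod]; exact Submodule.finrank_le _
  have hrn := LinearMap.finrank_range_add_finrank_ker Θ
  rw [finrank_pi_real] at hrn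
  have hker : 0 < finrank ℝ (LinearMap.ker Θ) := by omega
  have hne : LinearMap.ker Θ ≠ ⊥ := by
    intro hbot
    rw [hbot, finrank_bot] at hker
    omega
  obtain ⟨h, hmem, hh0⟩ := Submodule.ne_bot_iff _ |>.1 hne
  refine ⟨h, hh0, fun b hb => ?_⟩
  have := LinearMap.mem_ker.1 hmem
  have h2 := LinearMap.ext_iff.1 this ⟨b, hb⟩
  simpa [Θ, dlB] using h2

lemma interior_hyp_empty {a : Fin d → ℝ} (ha : a ≠ 0) (c : ℝ) :
    interior {x : Fin d → ℝ | dl a x = c} = ∅ := by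
  by_contra hne
  obtain ⟨x, hx⟩ := Set.nonempty_iff_ne_empty.2 hne
  obtain ⟨ε, hε, hball⟩ := Metric.isOpen_iff.1 isOpen_interior x hx
  set δ : ℝ := ε / (2 * (‖a‖ + 1)) with hδ
  have hδpos : 0 < δ := by positivity
  have hmem : x + δ • a ∈ {x : Fin d → ℝ | dl a x = c} := by
    apply interior_subset
    apply hball
    rw [Metric.mem_ball, dist_eq_norm]
    have : x + δ • a - x = δ • a := by abel
    rw [this, norm_smul, Real.norm_eq_abs, abs_of_pos hδpos]
    calc δ * ‖a‖ ≤ δ * (‖a‖ + 1) := by nlinarith [norm_nonneg a]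
    _ < ε := by rw [hδ, div_mul_eq_mul_div, div_lt_iff₀ (by positivity)]; nlinarith [norm_nonneg a]
  have hxc : dl a x = c := by simpa using interior_subset hx
  have : dl a (x + δ • a) = dl a x + δ * dl a a := by rw [map_add, map_smul]; rfl
  rw [Set.mem_setOf_eq, this, hxc] at hmem
  nlinarith [dl_self_pos ha, hδpos]

noncomputable def spanF (V : Finset (Fin d → ℝ)) (w g : Fin d → ℝ) : Submodule ℝ (Fin d → ℝ) :=
  Submodule.span ℝ ((fun v => v - w) '' {v : Fin d → ℝ | v ∈ V ∧ dl g v = dl g w})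

lemma mk_facet (V : Finset (Fin d → ℝ)) {w g : Fin d → ℝ} (hg : g ≠ 0)
    (hw : w ∈ convexHull ℝ (V : Set (Fin d → ℝ)))
    (hsupp : ∀ v ∈ V, dl g v ≤ dl g w)
    (hrk : d - 1 ≤ finrank ℝ (spanF V w g)) :
    ∃ F, IsFacet (convexHull ℝ (V : Set (Fin d → ℝ))) F ∧ w ∈ F := by
  set P := convexHull ℝ (V : Set (Fin d → ℝ)) with hP
  set c := dl g w with hc
  set F := {x ∈ P | dl g x = c} with hF
  have hPle : ∀ x ∈ P, dl g x ≤ c :=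
    fun x hx => convexHull_min (fun v hv => hsupp v hv) (convex_halfSpace_le (dl g).isLinear c) hx
  have hwF : w ∈ F := ⟨hw, rfl⟩
  have hsub : spanF V w g ≤ (affineSpan ℝ F).direction := by
    rw [spanF, Submodule.span_le]
    rintro _ ⟨v, ⟨hvV, hve⟩, rfl⟩
    have hvF : v ∈ F := ⟨subset_convexHull ℝ _ hvV, hve⟩
    exact AffineSubspace.vsub_mem_direction (mem_affineSpan ℝ hvF) (mem_affineSpan ℝ hwF)
  have hup : (affineSpan ℝ F).direction ≤ LinearMap.ker (dl g) := by
    rw [direction_affineSpan, vectorSpan_def, Submodule.span_le]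
    rintro _ ⟨x, hx, y, hy, rfl⟩
    have hx2 : dl g x = c := hx.2
    have hy2 : dl g y = c := hy.2
    have : dl g (x -ᵥ y) = 0 := by
      have : (x -ᵥ y : Fin d → ℝ) = x - y := rfl
      rw [this, map_sub, hx2, hy2, sub_self]
    exact LinearMap.mem_ker.2 this
  have hd1 : finrank ℝ (affineSpan ℝ F).direction = d - 1 := by
    have h1 : finrank ℝ (affineSpan ℝ F).direction ≤ d - 1 := by
      rw [← finrank_ker_dl hg]
      exact Submodule.finrank_mono hup
    have h2 : d - 1 ≤ finrank ℝ (affineSpan ℝ F).direction :=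
      le_trans hrk (Submodule.finrank_mono hsub)
    omega
  exact ⟨F, ⟨g, c, hg, hPle, rfl, hd1⟩, hwF⟩

lemma stepAux (V : Finset (Fin d → ℝ)) {w g h : Fin d → ℝ} (hg : g ≠ 0)
    (hsupp : ∀ v ∈ V, dl g v ≤ dl g w)
    (hkillS : ∀ b ∈ spanF V w g, dl h b = 0)
    (hkillg : dl h g = 0)
    (hu : ∃ u ∈ V, dl h w < dl h u) :
    ∃ g', g' ≠ 0 ∧ (∀ v ∈ V, dl g' v ≤ dl g' w) ∧
      finrank ℝ (spanF V w g) < finrank ℝ (spanF V w g') := by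
  classical
  obtain ⟨u1, hu1V, hu1⟩ := hu
  set Vp := V.filter (fun u => dl h w < dl h u) with hVp
  have hVpne : Vp.Nonempty := ⟨u1, Finset.mem_filter.2 ⟨hu1V, hu1⟩⟩
  have hkey : ∀ u ∈ Vp, dl g u < dl g w := by
    intro u huVp
    rcases Finset.mem_filter.1 huVp with ⟨huV, huh⟩
    rcases lt_or_eq_of_le (hsupp u huV) with hlt | heq
    · exact hlt
    · exfalso
      have hmem : u - w ∈ spanF V w g :=
        Submodule.subset_span ⟨u, ⟨huV, heq⟩, rfl⟩
      have := hkillS _ hmem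
      rw [map_sub] at this
      linarith
  set ε := Vp.inf' hVpne (fun u => (dl g w - dl g u) / (dl h u - dl h w)) with hε
  have hεpos : 0 < ε := by
    rw [hε, Finset.lt_inf'_iff]
    intro u huVp
    rcases Finset.mem_filter.1 huVp with ⟨huV, huh⟩
    exact div_pos (by linarith [hkey u huVp]) (by linarith)
  set g' := g + ε • h with hg'
  have hval : ∀ v, dl g' v = dl g v + ε * dl h v := by
    intro v; rw [hg', dl_add_left, dl_smul_left]
  have hsupp' : ∀ v ∈ V, dl g' v ≤ dl g' w := by
    intro v hvV
    rw [hval, hval]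
    rcases le_or_gt (dl h v) (dl h w) with hle | hlt
    · have := hsupp v hvV
      nlinarith
    · have hvVp : v ∈ Vp := Finset.mem_filter.2 ⟨hvV, hlt⟩
      have hεle : ε ≤ (dl g w - dl g v) / (dl h v - dl h w) :=
        Finset.inf'_le _ hvVp
      rw [le_div_iff₀ (by linarith)] at hεle
      nlinarith
  obtain ⟨us, husVp, husε⟩ := Finset.exists_mem_eq_inf' hVpne (fun u => (dl g w - dl g u) / (dl h u - dl h w))
  rcases Finset.mem_filter.1 husVp with ⟨husV, hush⟩
  have husne : dl h us - dl h w ≠ 0 := by linarith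
  have hustight : dl g' us = dl g' w := by
    rw [hval, hval, ← hε] at *
    rw [husε]
    field_simp
    ring
  have hg'0 : g' ≠ 0 := by
    intro h0
    have hdd : dl g' g' = dl g g + ε * ε * dl h h := by
      rw [hg', dl_add_left, dl_smul_left, map_add, map_smul, map_add, map_smul]
      have hcm : dl g h = dl h g := dl_comm g h
      rw [smul_eq_mul, smul_eq_mul, hcm, hkillg]
      ring
    rw [h0] at hdd
    have : dl (0 : Fin d → ℝ) (0 : Fin d → ℝ) = 0 := by simp [dl_apply]
    rw [this] at hdd
    nlinarith [dl_self_pos hg, dl_self_nonneg h, hεpos]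
  have hkill' : ∀ v ∈ V, dl g v = dl g w → dl h v = dl h w := by
    intro v hvV hve
    have hmem : v - w ∈ spanF V w g := Submodule.subset_span ⟨v, ⟨hvV, hve⟩, rfl⟩
    have := hkillS _ hmem
    rw [map_sub] at this
    linarith
  have hmono : spanF V w g ≤ spanF V w g' := by
    rw [spanF, spanF]
    apply Submodule.span_mono
    apply Set.image_mono
    rintro v ⟨hvV, hve⟩
    refine ⟨hvV, ?_⟩
    rw [hval, hval, hve, hkill' v hvV hve]
  have husnotin : us - w ∉ spanF V w g := by
    intro hmem
    have := hkillS _ hmem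
    rw [map_sub] at this
    linarith
  have husin : us - w ∈ spanF V w g' :=
    Submodule.subset_span ⟨us, ⟨husV, hustight⟩, rfl⟩
  have hlt : spanF V w g < spanF V w g' :=
    lt_of_le_of_ne hmono (fun heq => husnotin (heq ▸ husin))
  exact ⟨g', hg'0, hsupp', Submodule.finrank_lt_finrank_of_lt hlt⟩

lemma step (V : Finset (Fin d → ℝ)) {w g x0 : Fin d → ℝ} (hg : g ≠ 0)
    (hx0 : x0 ∈ interior (convexHull ℝ (V : Set (Fin d → ℝ))))
    (hsupp : ∀ v ∈ V, dl g v ≤ dl g w)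
    (hrk : finrank ℝ (spanF V w g) < d - 1) :
    ∃ g', g' ≠ 0 ∧ (∀ v ∈ V, dl g' v ≤ dl g' w) ∧
      finrank ℝ (spanF V w g) < finrank ℝ (spanF V w g') := by
  classical
  set B := spanF V w g ⊔ Submodule.span ℝ {g} with hB
  have hBrk : finrank ℝ B < d := by
    have h1 := Submodule.finrank_add_le_finrank_add_finrank (spanF V w g) (Submodule.span ℝ {g})
    rw [finrank_span_singleton hg] at h1
    rw [hB]
    omega
  obtain ⟨h, hh0, hkill⟩ := exists_ann B hBrk
  have hkillS : ∀ b ∈ spanF V w g, dl h b = 0 :=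
    fun b hb => hkill b (le_sup_left (a := spanF V w g) (b := Submodule.span ℝ {g}) hb)
  have hkillg : dl h g = 0 :=
    hkill g (le_sup_right (a := spanF V w g) (b := Submodule.span ℝ {g}) (Submodule.mem_span_singleton_self g))
  have hex : ∃ u ∈ V, dl h u ≠ dl h w := by
    by_contra hno
    push_neg at hno
    have hsub : convexHull ℝ (V : Set (Fin d → ℝ)) ⊆ {x | dl h x = dl h w} :=
      convexHull_min (fun v hv => hno v hv) (convex_hyperplane (dl h).isLinear _)
    have := interior_mono hsub hx0
    rw [interior_hyp_empty hh0] at this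
    exact this
  obtain ⟨u, huV, hune⟩ := hex
  rcases lt_or_gt_of_ne hune with hlt | hgt
  · -- use -h
    refine stepAux (h := -h) V hg hsupp (fun b hb => ?_) ?_ ⟨u, huV, ?_⟩
    · rw [dl_neg_left, hkillS b hb, neg_zero]
    · rw [dl_neg_left, hkillg, neg_zero]
    · rw [dl_neg_left, dl_neg_left]
      linarith
  · exact stepAux V hg hsupp hkillS hkillg ⟨u, huV, hgt⟩

lemma exists_facet (V : Finset (Fin d → ℝ)) (hd : 2 ≤ d)
    (hfull : (interior (convexHull ℝ (V : Set (Fin d → ℝ)))).Nonempty)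
    {w : Fin d → ℝ} (hw : w ∈ frontier (convexHull ℝ (V : Set (Fin d → ℝ)))) :
    ∃ F, IsFacet (convexHull ℝ (V : Set (Fin d → ℝ))) F ∧ w ∈ F := by
  classical
  set P := convexHull ℝ (V : Set (Fin d → ℝ)) with hPdef
  obtain ⟨x0, hx0⟩ := hfull
  have hPc : IsClosed P := (V.finite_toSet.isCompact_convexHull ℝ).isClosed
  rw [hPc.frontier_eq] at hw
  obtain ⟨hwP, hwni⟩ := hw
  -- supporting functional
  obtain ⟨f, hf⟩ := geometric_hahn_banach_open_point
    ((convex_convexHull ℝ (V : Set (Fin d → ℝ))).interior) isOpen_interior hwni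
  set g : Fin d → ℝ := fun i => f (Pi.single i 1) with hgdef
  have hfg : ∀ x, dl g x = f x := by
    intro x
    have h1 : x = ∑ i, Pi.single i (x i) := (Finset.univ_sum_single x).symm
    have h2 : f x = ∑ i, f (Pi.single i (x i)) := by
      conv_lhs => rw [h1]
      exact map_sum f _ _
    have h3 : ∀ i, Pi.single i (x i) = x i • (Pi.single i 1 : Fin d → ℝ) := by
      intro i
      funext j
      by_cases hij : j = i
      · subst hij; simp
      · simp [Pi.single_apply, hij]
    rw [h2]
    rw [dl_apply]
    apply Finset.sum_congr rfl
    intro i _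
    rw [h3 i, map_smul]
    simp [hgdef, mul_comm]
  have hstrict : ∀ a ∈ interior P, dl g a < dl g w := by
    intro a ha
    rw [hfg, hfg]
    exact hf a ha
  have hg0 : g ≠ 0 := by
    intro h0
    have := hstrict x0 hx0
    rw [h0, dl_zero_left, dl_zero_left] at this
    exact lt_irrefl _ this
  have hsupp : ∀ v ∈ V, dl g v ≤ dl g w := by
    intro v hvV
    by_contra hgt
    push_neg at hgt
    have hAC : dl g x0 < dl g w := hstrict x0 hx0
    set t : ℝ := (dl g v - dl g w) / (2 * (dl g v - dl g x0)) with ht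
    have hBA : 0 < dl g v - dl g x0 := by linarith
    have ht0 : 0 < t := div_pos (by linarith) (by linarith)
    have ht1 : t < 1 := by
      rw [ht, div_lt_one (by linarith)]; linarith
    have hmem : t • x0 + (1 - t) • v ∈ interior P :=
      (convex_convexHull ℝ (V : Set (Fin d → ℝ))).combo_interior_closure_mem_interior hx0
        (subset_closure (subset_convexHull ℝ _ hvV)) ht0 (by linarith) (by ring)
    have hlt2 : t * dl g x0 + (1 - t) * dl g v < dl g w := by
      have := hstrict _ hmem
      rwa [map_add, map_smul, map_smul, smul_eq_mul, smul_eq_mul] at this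
    have htval : t * (dl g v - dl g x0) = (dl g v - dl g w) / 2 := by
      rw [ht]; field_simp
    nlinarith
  -- induction
  have main : ∀ n : ℕ, ∀ g : Fin d → ℝ, g ≠ 0 → (∀ v ∈ V, dl g v ≤ dl g w) →
      d - 1 ≤ n + finrank ℝ (spanF V w g) → ∃ F, IsFacet P F ∧ w ∈ F := by
    intro n
    induction n with
    | zero =>
        intro g hg hsupp hrk
        exact mk_facet V hg hwP hsupp (by omega)
    | succ n ih =>
        intro g hg hsupp hrk
        rcases le_or_gt (d - 1) (finrank ℝ (spanF V w g)) with hge | hlt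
        · exact mk_facet V hg hwP hsupp hge
        · obtain ⟨g', hg', hsupp', hlt'⟩ := step V hg hx0 hsupp hlt
          exact ih g' hg' hsupp' (by omega)
  exact main (d - 1) g hg0 hsupp (Nat.le_add_right _ _)

end Facet

section Orient

lemma dl_sum_eq (a x : Fin d → ℝ) : (∑ i, a i * x i) = dl a x := rfl

lemma fvec_swap (u v : Fin (d+1)) : fvec d v u = -(fvec d u v) := by
  rw [fvec, fvec, neg_sub]

lemma facet_nonempty {P F : Set (Fin d → ℝ)} (hd : 2 ≤ d) (hF : IsFacet P F) :
    F.Nonempty := by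
  rcases hF with ⟨a, c, -, -, -, hdim⟩
  rcases Set.eq_empty_or_nonempty F with he | hne
  · exfalso
    rw [he] at hdim
    rw [AffineSubspace.span_empty, AffineSubspace.direction_bot, finrank_bot] at hdim
    omega
  · exact hne

lemma vectorSpan_le_ker {F : Set (Fin d → ℝ)} {b : Fin d → ℝ} {r : ℝ}
    (hb : ∀ x ∈ F, dl b x = r) :
    (affineSpan ℝ F).direction ≤ LinearMap.ker (dl b) := by
  rw [direction_affineSpan, vectorSpan_def, Submodule.span_le]
  rintro _ ⟨x, hx, y, hy, rfl⟩
  have : dl b (x -ᵥ y) = 0 := by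
    have hxy : (x -ᵥ y : Fin d → ℝ) = x - y := rfl
    rw [hxy, map_sub, hb x hx, hb y hy, sub_self]
  exact LinearMap.mem_ker.2 this

lemma facet_orient {P F : Set (Fin d → ℝ)} (hd : 2 ≤ d)
    (halc : ∃ H, IsAlcoveHyperplane H ∧ F ⊆ H) (hF : IsFacet P F) :
    ∃ (u v : Fin (d+1)) (kk : ℤ), u ≠ v ∧ (∀ x ∈ P, dl (fvec d u v) x ≤ (kk:ℝ)) ∧
      (∀ x ∈ F, dl (fvec d u v) x = (kk:ℝ)) := by
  obtain ⟨H, ⟨i, j, kz, hij, hHdef⟩, hFH⟩ := halc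
  obtain ⟨a, c, ha0, hle, hFeq, hdim⟩ := hF
  obtain ⟨w0, hw0⟩ := facet_nonempty hd ⟨a, c, ha0, hle, hFeq, hdim⟩
  have hdl : ∀ x ∈ P, dl a x ≤ c := hle
  have hdlF : ∀ x ∈ F, dl a x = c := by
    intro x hx; rw [hFeq] at hx; exact hx.2
  have hFv : ∀ x ∈ F, dl (fvec d i j) x = (kz:ℝ) := by
    intro x hx
    rw [dl_fvec]
    have := hFH hx
    rw [hHdef] at this
    exact this
  have hWa : (affineSpan ℝ F).direction ≤ LinearMap.ker (dl a) := vectorSpan_le_ker hdlF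
  have hWf : (affineSpan ℝ F).direction ≤ LinearMap.ker (dl (fvec d i j)) :=
    vectorSpan_le_ker hFv
  have hWeq : (affineSpan ℝ F).direction = LinearMap.ker (dl a) :=
    Submodule.eq_of_le_of_finrank_le hWa (by rw [finrank_ker_dl ha0, hdim])
  have hker : LinearMap.ker (dl a) ≤ LinearMap.ker (dl (fvec d i j)) := by
    rw [← hWeq]; exact hWf
  have haa : (0:ℝ) < dl a a := dl_self_pos ha0
  set lam : ℝ := dl (fvec d i j) a / dl a a with hlam
  have hprop : ∀ y, dl (fvec d i j) y = lam * dl a y := by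
    intro y
    have hy' : dl a (y - (dl a y / dl a a) • a) = 0 := by
      rw [map_sub, map_smul, smul_eq_mul]
      field_simp
      ring
    have hmem : y - (dl a y / dl a a) • a ∈ LinearMap.ker (dl (fvec d i j)) :=
      hker (LinearMap.mem_ker.2 hy')
    have h0 := LinearMap.mem_ker.1 hmem
    rw [map_sub, map_smul, smul_eq_mul, sub_eq_zero] at h0
    rw [h0, hlam]
    field_simp
  have hlam0 : lam ≠ 0 := by
    intro h0
    have := hprop (fvec d i j)
    rw [h0, zero_mul] at this
    have hne := fvec_ne_zero (d := d) hij
    exact (ne_of_gt (dl_self_pos hne)) this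
  have hkc : (kz:ℝ) = lam * c := by
    rw [← hFv w0 hw0, hprop w0, hdlF w0 hw0]
  rcases lt_or_gt_of_ne hlam0 with hneg | hpos
  · refine ⟨j, i, -kz, hij.symm, ?_, ?_⟩
    · intro x hx
      rw [fvec_swap, dl_neg_left, hprop x]
      push_cast
      have := hdl x hx
      nlinarith
    · intro x hx
      rw [fvec_swap, dl_neg_left, hFv x hx]
      push_cast
      ring
  · refine ⟨i, j, kz, hij, ?_, hFv⟩
    intro x hx
    rw [hprop x, hkc]
    have := hdl x hx
    nlinarith

end Orient

section MemInt

lemma MV_le {V : Finset (Fin d → ℝ)} (hV : V.Nonempty) {a : Fin d → ℝ} {r : ℝ}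
    (hside : ∀ x ∈ convexHull ℝ (V : Set (Fin d → ℝ)), dl a x ≤ r) :
    MV V hV a ≤ r :=
  Finset.sup'_le _ _ (fun w hw => hside w (subset_convexHull ℝ _ hw))

lemma mem_interior_of_strict (V : Finset (Fin d → ℝ)) (hV : V.Nonempty) (hd : 2 ≤ d)
    (hfull : (interior (convexHull ℝ (V : Set (Fin d → ℝ)))).Nonempty)
    (halc : ∀ F, IsFacet (convexHull ℝ (V : Set (Fin d → ℝ))) F →
      ∃ H, IsAlcoveHyperplane H ∧ F ⊆ H)
    {y : Fin d → ℝ}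
    (hstrict : ∀ u v : Fin (d+1), u ≠ v → dl (fvec d u v) y < MV V hV (fvec d u v)) :
    y ∈ interior (convexHull ℝ (V : Set (Fin d → ℝ))) := by
  classical
  set P := convexHull ℝ (V : Set (Fin d → ℝ)) with hPdef
  by_contra hni
  have hPc : IsClosed P := (V.finite_toSet.isCompact_convexHull ℝ).isClosed
  obtain ⟨x0, hx0⟩ := hfull
  by_cases hyP : y ∈ P
  · have hyF : y ∈ frontier P := by rw [hPc.frontier_eq]; exact ⟨hyP, hni⟩
    obtain ⟨F, hF, hyFF⟩ := exists_facet V hd ⟨x0, hx0⟩ hyF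
    obtain ⟨u, v, kk, huv, hside, hFk⟩ := facet_orient hd (halc F hF) hF
    have h1 := hstrict u v huv
    have h2 : MV V hV (fvec d u v) ≤ (kk:ℝ) := MV_le hV hside
    have h3 : dl (fvec d u v) y = (kk:ℝ) := hFk y hyFF
    linarith
  · set γ : ℝ → (Fin d → ℝ) := fun t => x0 + t • (y - x0) with hγ
    have hγc : Continuous γ := by
      apply continuous_const.add
      exact continuous_id.smul continuous_const
    set S : Set ℝ := Set.Icc (0:ℝ) 1 ∩ γ ⁻¹' P with hS
    have hγ0 : γ 0 = x0 := by simp [hγ]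
    have hγ1 : γ 1 = y := by simp [hγ]
    have hS0 : (0:ℝ) ∈ S := ⟨⟨le_refl 0, zero_le_one⟩, by
      simp only [Set.mem_preimage, hγ0]; exact interior_subset hx0⟩
    have hSclosed : IsClosed S := isClosed_Icc.inter (hPc.preimage hγc)
    have hScomp : IsCompact S :=
      isCompact_Icc.of_isClosed_subset hSclosed Set.inter_subset_left
    set ts : ℝ := sSup S with hts
    have htS : ts ∈ S := hScomp.sSup_mem ⟨0, hS0⟩
    have ht1 : ts ≠ 1 := by
      intro h1
      apply hyP
      have := htS.2
      rw [Set.mem_preimage, h1, hγ1] at this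
      exact this
    have htlt : ts < 1 := lt_of_le_of_ne htS.1.2 ht1
    have hwP : γ ts ∈ P := htS.2
    have hwfr : γ ts ∈ frontier P := by
      rw [hPc.frontier_eq]
      refine ⟨hwP, fun hwint => ?_⟩
      have hnh : γ ⁻¹' interior P ∈ nhds ts := (isOpen_interior.preimage hγc).mem_nhds hwint
      obtain ⟨l, u', hmem, hsub⟩ := mem_nhds_iff_exists_Ioo_subset.1 hnh
      set t' : ℝ := (ts + min u' 1)/2 with ht'
      have h1 : ts < min u' 1 := lt_min hmem.2 htlt
      have ht'gt : ts < t' := by rw [ht']; linarith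
      have ht'lt : t' < min u' 1 := by rw [ht']; linarith
      have ht'S : t' ∈ S := by
        refine ⟨⟨le_trans htS.1.1 (le_of_lt ht'gt), ?_⟩, ?_⟩
        · have := lt_of_lt_of_le ht'lt (min_le_right u' 1); linarith
        · have hmem2 : t' ∈ γ ⁻¹' interior P := hsub ⟨lt_trans hmem.1 ht'gt,
            lt_of_lt_of_le ht'lt (min_le_left u' 1)⟩
          exact Set.mem_preimage.2 (interior_subset (Set.mem_preimage.1 hmem2))
      have : t' ≤ ts := le_csSup hScomp.bddAbove ht'S
      linarith
    obtain ⟨F, hF, hwFF⟩ := exists_facet V hd ⟨x0, hx0⟩ hwfr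
    obtain ⟨u, v, kk, huv, hside, hFk⟩ := facet_orient hd (halc F hF) hF
    have hMle : MV V hV (fvec d u v) ≤ (kk:ℝ) := MV_le hV hside
    have hx0lt : dl (fvec d u v) x0 < (kk:ℝ) :=
      lt_of_lt_of_le (interior_lt V hV (fvec_ne_zero huv) hx0) hMle
    have hylt : dl (fvec d u v) y < (kk:ℝ) := lt_of_lt_of_le (hstrict u v huv) hMle
    have hweq : dl (fvec d u v) (γ ts) = (kk:ℝ) := hFk _ hwFF
    have hγval : dl (fvec d u v) (γ ts)
        = dl (fvec d u v) x0 + ts * (dl (fvec d u v) y - dl (fvec d u v) x0) := by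
      rw [hγ]
      simp only [map_add, map_smul, map_sub, smul_eq_mul]
    have h0t : 0 ≤ ts := htS.1.1
    nlinarith [hγval, hweq]

end MemInt

section IntPart

def extZ {d : ℕ} (p : Fin d → ℤ) : Fin (d+1) → ℤ := Fin.cons 0 p

lemma dl_fvec_int (p : Fin d → ℤ) (u v : Fin (d+1)) :
    dl (fvec d u v) (fun t => (p t : ℝ)) = ((extZ p u - extZ p v : ℤ) : ℝ) := by
  rw [dl_fvec]
  have hext : ∀ w : Fin (d+1), extCoord (fun t => (p t : ℝ)) w = ((extZ p w : ℤ) : ℝ) := by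
    intro w
    induction w using Fin.cases with
    | zero => simp [extCoord, extZ]
    | succ t => simp [extCoord, extZ]
  rw [hext u, hext v]
  push_cast
  ring

lemma ILP_finite (V : Finset (Fin d → ℝ)) :
    {p : Fin d → ℤ | (fun i => (p i : ℝ)) ∈ interior (convexHull ℝ (V : Set (Fin d → ℝ)))}.Finite := by
  obtain ⟨R, hR⟩ := (V.finite_toSet.isCompact_convexHull ℝ).isBounded.subset_closedBall 0
  apply Set.Finite.subset (Set.Finite.pi (fun i : Fin d => Set.finite_Icc (-⌈R⌉) ⌈R⌉))
  intro p hp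
  have hpP := interior_subset hp
  have hball := hR hpP
  rw [Metric.mem_closedBall, dist_zero_right] at hball
  rw [Set.mem_univ_pi]
  intro i
  have h2 : |(p i : ℝ)| ≤ R := by
    have := norm_le_pi_norm (fun t => (p t : ℝ)) i
    simp only [Real.norm_eq_abs] at this
    exact le_trans this hball
  have hup : (p i : ℝ) ≤ (⌈R⌉ : ℝ) := le_trans (le_abs_self _) (h2.trans (Int.le_ceil R))
  have hlo : ((-⌈R⌉ : ℤ) : ℝ) ≤ (p i : ℝ) := by
    push_cast
    have := neg_abs_le ((p i : ℝ))
    have h3 := Int.le_ceil R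
    linarith
  constructor
  · exact_mod_cast hlo
  · exact_mod_cast hup

lemma walk_of_rtg {α : Type*} {r : α → α → Prop} {x y : α} (h : Relation.ReflTransGen r x y) :
    ∃ (t : ℕ) (v : ℕ → α), v 0 = x ∧ v t = y ∧ ∀ s < t, r (v s) (v (s+1)) := by
  induction h with
  | refl => exact ⟨0, fun _ => x, rfl, rfl, by omega⟩
  | @tail b c hab hbc ih =>
      obtain ⟨t, v, h0, ht, hch⟩ := ih
      refine ⟨t+1, fun s => if s ≤ t then v s else c, by simpa using h0, by simp, ?_⟩
      intro s hs
      rcases Nat.lt_or_ge s t with hlt | hge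
      · have hs1 : s + 1 ≤ t := hlt
        simp only [if_pos (Nat.le_of_lt hlt), if_pos hs1]
        exact hch s hlt
      · have hst : s = t := by omega
        subst hst
        simp only [if_pos (le_refl s), if_neg (by omega : ¬ s + 1 ≤ s)]
        rw [ht]
        exact hbc

lemma two_tight_contra {F : Set (Fin d → ℝ)} (hd : 2 ≤ d)
    (hdim : finrank ℝ (affineSpan ℝ F).direction = d - 1)
    {a b c : Fin (d+1)} (hab : a ≠ b) (hbc : b ≠ c) (hac : a ≠ c)
    {C1 C2 : ℝ}
    (h1 : ∀ x ∈ F, dl (fvec d a b) x = C1)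
    (h2 : ∀ x ∈ F, dl (fvec d b c) x = C2) : False := by
  classical
  set Φ : (Fin d → ℝ) →ₗ[ℝ] ℝ × ℝ := LinearMap.prod (dl (fvec d a b)) (dl (fvec d b c)) with hΦ
  have hsurj : Function.Surjective Φ := by
    rintro ⟨c1, c2⟩
    set X : Fin (d+1) → ℝ := fun u => if u = a then c1 + c2 else if u = b then c2 else 0 with hX
    refine ⟨fun s => X s.succ - X 0, ?_⟩
    have hext : ∀ u, extCoord (fun s => X s.succ - X 0) u = X u - X 0 := by
      intro u
      induction u using Fin.cases with
      | zero => simp [extCoord]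
      | succ s => simp [extCoord]
    have hXa : X a = c1 + c2 := by rw [hX]; simp
    have hXb : X b = c2 := by rw [hX]; simp [Ne.symm hab]
    have hXc : X c = 0 := by rw [hX]; simp [Ne.symm hac, Ne.symm hbc]
    have e1 : dl (fvec d a b) (fun s => X s.succ - X 0) = c1 := by
      rw [dl_fvec, hext a, hext b, hXa, hXb]; ring
    have e2 : dl (fvec d b c) (fun s => X s.succ - X 0) = c2 := by
      rw [dl_fvec, hext b, hext c, hXb, hXc]; ring
    rw [hΦ]
    exact Prod.ext e1 e2
  have hker : finrank ℝ (LinearMap.ker Φ) = d - 2 := by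
    have hrn := LinearMap.finrank_range_add_finrank_ker Φ
    rw [finrank_pi_real, LinearMap.range_eq_top.2 hsurj, finrank_top] at hrn
    rw [Module.finrank_prod, Module.finrank_self] at hrn
    omega
  have hle : (affineSpan ℝ F).direction ≤ LinearMap.ker Φ := by
    rw [direction_affineSpan, vectorSpan_def, Submodule.span_le]
    rintro _ ⟨x, hx, y, hy, rfl⟩
    have hxy : (x -ᵥ y : Fin d → ℝ) = x - y := rfl
    have hc1 : dl (fvec d a b) (x - y) = 0 := by
      rw [map_sub, h1 x hx, h1 y hy, sub_self]
    have hc2 : dl (fvec d b c) (x - y) = 0 := by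
      rw [map_sub, h2 x hx, h2 y hy, sub_self]
    show x -ᵥ y ∈ LinearMap.ker Φ
    rw [LinearMap.mem_ker, hxy, hΦ]
    exact Prod.ext hc1 hc2
  have hfr := Submodule.finrank_mono hle
  rw [hdim, hker] at hfr
  omega

end IntPart

section Main

lemma main_exists (V : Finset (Fin d → ℝ)) (hV : V.Nonempty) (hd : 2 ≤ d)
    (hfull : (interior (convexHull ℝ (V : Set (Fin d → ℝ)))).Nonempty)
    (halc : ∀ F, IsFacet (convexHull ℝ (V : Set (Fin d → ℝ))) F →
      ∃ H, IsAlcoveHyperplane H ∧ F ⊆ H)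
    (hILP : {p : Fin d → ℤ | (fun i => (p i : ℝ)) ∈ interior (convexHull ℝ (V : Set (Fin d → ℝ)))}.Nonempty)
    {F : Set (Fin d → ℝ)} (hF : IsFacet (convexHull ℝ (V : Set (Fin d → ℝ))) F)
    {i j : Fin (d+1)} {k : ℤ} (hij : i ≠ j)
    (hside : ∀ x ∈ convexHull ℝ (V : Set (Fin d → ℝ)), dl (fvec d i j) x ≤ (k:ℝ))
    (hFk : ∀ x ∈ F, dl (fvec d i j) x = (k:ℝ)) :
    ∃ p : Fin d → ℤ, (fun t => (p t : ℝ)) ∈ interior (convexHull ℝ (V : Set (Fin d → ℝ))) ∧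
      k - ((d:ℤ) - 1) ≤ extZ p i - extZ p j ∧ extZ p i - extZ p j ≤ k - 1 := by
  classical
  set P := convexHull ℝ (V : Set (Fin d → ℝ)) with hPdef
  set m : Fin (d+1) → Fin (d+1) → ℤ := fun u v => ⌈MV V hV (fvec d u v)⌉ - 1 with hm
  have hint_le : ∀ (p : Fin d → ℤ), (fun t => (p t : ℝ)) ∈ interior P →
      ∀ u v : Fin (d+1), u ≠ v → extZ p u - extZ p v ≤ m u v := by
    intro p hp u v huv
    have h1 : dl (fvec d u v) (fun t => (p t:ℝ)) < MV V hV (fvec d u v) :=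
      interior_lt V hV (fvec_ne_zero huv) hp
    rw [dl_fvec_int] at h1
    have h2 : (extZ p u - extZ p v : ℤ) < ⌈MV V hV (fvec d u v)⌉ := Int.lt_ceil.2 h1
    simp only [hm]
    omega
  have hm_lt : ∀ u v : Fin (d+1), ((m u v : ℤ):ℝ) < MV V hV (fvec d u v) := by
    intro u v
    rw [hm]
    push_cast
    have h1 := Int.ceil_lt_add_one (MV V hV (fvec d u v))
    linarith
  have hILPfin := ILP_finite (d := d) V
  obtain ⟨z, hzmem, hzmax⟩ := Finset.exists_max_image hILPfin.toFinset
    (fun p => extZ p i - extZ p j) (by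
      rw [Set.Finite.toFinset_nonempty]; exact hILP)
  rw [Set.Finite.mem_toFinset] at hzmem
  have hzmax' : ∀ p : Fin d → ℤ, (fun t => (p t : ℝ)) ∈ interior P →
      extZ p i - extZ p j ≤ extZ z i - extZ z j := by
    intro p hp
    exact hzmax p (hILPfin.mem_toFinset.2 hp)
  set μ : ℤ := extZ z i - extZ z j with hμ
  have hub : μ ≤ k - 1 := by
    have h1 : dl (fvec d i j) (fun t => (z t:ℝ)) < MV V hV (fvec d i j) :=
      interior_lt V hV (fvec_ne_zero hij) hzmem
    have h2 : MV V hV (fvec d i j) ≤ (k:ℝ) := MV_le hV hside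
    rw [dl_fvec_int] at h1
    have h3 : ((extZ z i - extZ z j : ℤ) : ℝ) < (k : ℝ) := lt_of_lt_of_le h1 h2
    have h4 : extZ z i - extZ z j < k := by exact_mod_cast h3
    omega
  refine ⟨z, hzmem, ?_, hub⟩
  by_contra hlow
  push_neg at hlow
  have hlow' : μ ≤ k - (d:ℤ) := by omega
  set tight : Fin (d+1) → Fin (d+1) → Prop :=
    fun u v => u ≠ v ∧ extZ z u - extZ z v = m u v with htight
  set T : Set (Fin (d+1)) := {u | Relation.ReflTransGen tight i u} with hT
  by_cases hjT : j ∈ T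
  · -- walk from i to j, contradiction via dimension
    have hrtg : Relation.ReflTransGen tight i j := hjT
    have hPred : ∃ t : ℕ, ∃ v : ℕ → Fin (d+1),
        v 0 = i ∧ v t = j ∧ ∀ s < t, tight (v s) (v (s+1)) := walk_of_rtg hrtg
    set t := Nat.find hPred with htdef
    obtain ⟨v, hv0, hvt, hch⟩ := Nat.find_spec hPred
    have hinj2 : ∀ s1 s2, s1 < s2 → s2 ≤ t → v s1 ≠ v s2 := by
      intro s1 s2 h12 h2t heq
      obtain ⟨Δ, hΔ⟩ : ∃ Δ, s2 - s1 = Δ := ⟨_, rfl⟩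
      have hΔpos : 0 < Δ := by omega
      have hshort : ∃ v' : ℕ → Fin (d+1), v' 0 = i ∧ v' (t - Δ) = j ∧
          ∀ s < t - Δ, tight (v' s) (v' (s+1)) := by
        refine ⟨fun s => if s < s1 then v s else v (s + Δ), ?_, ?_, ?_⟩
        · by_cases h0 : 0 < s1
          · simpa [h0] using hv0
          · have hs10 : s1 = 0 := by omega
            rw [hs10] at heq
            simp only [if_neg h0]
            have h0Δ : 0 + Δ = s2 := by omega
            rw [h0Δ, ← heq]
            exact hv0
        · have hge : ¬ (t - Δ < s1) := by omega
          simp only [if_neg hge]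
          have : t - Δ + Δ = t := by omega
          rw [this, hvt]
        · intro s hs
          by_cases hc1 : s + 1 < s1
          · simp only [if_pos (by omega : s < s1), if_pos hc1]
            exact hch s (by omega)
          · by_cases hc2 : s < s1
            · -- s + 1 = s1
              have hs1eq : s + 1 = s1 := by omega
              simp only [if_pos hc2, if_neg hc1]
              have h3 : s + 1 + Δ = s2 := by omega
              rw [h3, ← heq, ← hs1eq]
              exact hch s (by omega)
            · simp only [if_neg hc2, if_neg (by omega : ¬ s + 1 < s1)]
              have : s + Δ + 1 = s + 1 + Δ := by omega
              rw [← this]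
              exact hch (s + Δ) (by omega)
      obtain ⟨v', hv'0, hv't, hch'⟩ := hshort
      exact Nat.find_min hPred (by omega : t - Δ < t) ⟨v', hv'0, hv't, hch'⟩
    have hinj : ∀ s1 s2, s1 ≤ t → s2 ≤ t → v s1 = v s2 → s1 = s2 := by
      intro s1 s2 h1 h2 heq
      rcases Nat.lt_trichotomy s1 s2 with h | h | h
      · exact absurd heq (hinj2 s1 s2 h h2)
      · exact h
      · exact absurd heq.symm (hinj2 s2 s1 h h1)
    have htle : t ≤ d := by
      have hinjF : Function.Injective (fun s : Fin (t+1) => v s) := by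
        intro a b hab
        exact Fin.ext (hinj a b (Nat.lt_succ_iff.1 a.2) (Nat.lt_succ_iff.1 b.2) hab)
      have := Fintype.card_le_of_injective _ hinjF
      simpa using this
    have ht1 : 1 ≤ t := by
      rcases Nat.eq_zero_or_pos t with h0 | h1
      · exfalso; apply hij; rw [← hv0, ← hvt, ← htdef, h0]
      · exact h1
    have hμm : μ = ∑ s ∈ Finset.range t, m (v s) (v (s+1)) := by
      have htel : ∑ s ∈ Finset.range t, (extZ z (v s) - extZ z (v (s+1)))
          = extZ z (v 0) - extZ z (v t) := Finset.sum_range_sub' (fun s => extZ z (v s)) t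
      rw [hv0, hvt] at htel
      rw [hμ, ← htel]
      apply Finset.sum_congr rfl
      intro s hs
      exact (hch s (by rw [← htdef]; exact Finset.mem_range.1 hs)).2
    obtain ⟨w0, hw0⟩ := facet_nonempty hd hF
    have hFP : F ⊆ P := by
      obtain ⟨a, c, -, -, hFeq, -⟩ := hF
      rw [hFeq]
      exact fun x hx => hx.1
    have hw0P : w0 ∈ P := hFP hw0
    set C : ℕ → ℤ := fun s => ⌈MV V hV (fvec d (v s) (v (s+1)))⌉ with hC
    have htelF : ∀ x ∈ F, ∑ s ∈ Finset.range t, dl (fvec d (v s) (v (s+1))) x = (k:ℝ) := by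
      intro x hxF
      have h1 : ∀ s, dl (fvec d (v s) (v (s+1))) x
          = extCoord x (v s) - extCoord x (v (s+1)) := fun s => dl_fvec _ _ _
      calc ∑ s ∈ Finset.range t, dl (fvec d (v s) (v (s+1))) x
          = ∑ s ∈ Finset.range t, (extCoord x (v s) - extCoord x (v (s+1))) :=
            Finset.sum_congr rfl (fun s _ => h1 s)
        _ = extCoord x (v 0) - extCoord x (v t) := Finset.sum_range_sub' _ t
        _ = (k:ℝ) := by rw [hv0, hvt, ← dl_fvec]; exact hFk x hxF
    have hkC : k ≤ ∑ s ∈ Finset.range t, C s := by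
      have hreal : (k:ℝ) ≤ ∑ s ∈ Finset.range t, (C s : ℝ) := by
        rw [← htelF w0 hw0]
        apply Finset.sum_le_sum
        intro s _
        exact le_trans (le_MV V hV hw0P) (Int.le_ceil _)
      have : (k:ℝ) ≤ ((∑ s ∈ Finset.range t, C s : ℤ) : ℝ) := by push_cast; exact hreal
      exact_mod_cast this
    have hμC : μ = (∑ s ∈ Finset.range t, C s) - t := by
      rw [hμm]
      have : ∀ s ∈ Finset.range t, m (v s) (v (s+1)) = C s - 1 := by
        intro s _; rw [hm, hC]
      rw [Finset.sum_congr rfl this, Finset.sum_sub_distrib]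
      simp
    have hteq : t = d ∧ ∑ s ∈ Finset.range t, C s = k := by
      constructor <;> omega
    have htd : t = d := hteq.1
    have hCk : ∑ s ∈ Finset.range t, C s = k := hteq.2
    have hallF : ∀ s, s < t → ∀ x ∈ F, dl (fvec d (v s) (v (s+1))) x = (C s : ℝ) := by
      intro s hst x hxF
      have hxP : x ∈ P := hFP hxF
      have hsum0 : ∑ s' ∈ Finset.range t, ((C s' : ℝ) - dl (fvec d (v s') (v (s'+1))) x) = 0 := by
        rw [Finset.sum_sub_distrib, htelF x hxF]
        have : (∑ s' ∈ Finset.range t, (C s' : ℝ)) = ((∑ s' ∈ Finset.range t, C s' : ℤ) : ℝ) := by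
          push_cast; ring
        rw [this, hCk, sub_self]
      have hnn : ∀ s' ∈ Finset.range t, 0 ≤ (C s' : ℝ) - dl (fvec d (v s') (v (s'+1))) x := by
        intro s' _
        have := le_trans (le_MV V hV hxP) (Int.le_ceil (MV V hV (fvec d (v s') (v (s'+1)))))
        linarith
      have := (Finset.sum_eq_zero_iff_of_nonneg hnn).1 hsum0 s (Finset.mem_range.2 hst)
      linarith
    obtain ⟨a0, c0, -, -, -, hdim⟩ := hF
    have h01 : v 0 ≠ v 1 := fun h => by have := hinj 0 1 (by omega) (by omega) h; omega
    have h12 : v 1 ≠ v 2 := fun h => by have := hinj 1 2 (by omega) (by omega) h; omega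
    have h02 : v 0 ≠ v 2 := fun h => by have := hinj 0 2 (by omega) (by omega) h; omega
    exact two_tight_contra hd hdim h01 h12 h02
      (hallF 0 (by omega)) (hallF 1 (by omega))
  · -- improve z
    set Z' : Fin (d+1) → ℤ := fun u => extZ z u + (if u ∈ T then 1 else 0) with hZ'
    set z' : Fin d → ℤ := fun s => Z' s.succ - Z' 0 with hz'
    have hz'ext : ∀ u, extZ z' u = Z' u - Z' 0 := by
      intro u
      induction u using Fin.cases with
      | zero => simp [extZ]
      | succ s => simp [extZ, hz']
    have hTclosed : ∀ u v : Fin (d+1), u ∈ T → tight u v → v ∈ T := by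
      intro u v hu htuv
      exact Relation.ReflTransGen.tail hu htuv
    have hfeas : ∀ u v : Fin (d+1), u ≠ v → extZ z' u - extZ z' v ≤ m u v := by
      intro u v huv
      rw [hz'ext, hz'ext]
      have hbase := hint_le z hzmem u v huv
      by_cases huT : u ∈ T
      · by_cases hvT : v ∈ T
        · rw [hZ']; simp only [if_pos huT, if_pos hvT]; omega
        · have hnt : ¬ tight u v := fun ht => hvT (hTclosed u v huT ht)
          have hne2 : extZ z u - extZ z v ≠ m u v := by
            intro he
            exact hnt ⟨huv, he⟩
          rw [hZ']; simp only [if_pos huT, if_neg hvT]; omega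
      · by_cases hvT : v ∈ T
        · rw [hZ']; simp only [if_neg huT, if_pos hvT]; omega
        · rw [hZ']; simp only [if_neg huT, if_neg hvT]; omega
    have hz'int : (fun t => (z' t : ℝ)) ∈ interior P := by
      apply mem_interior_of_strict V hV hd hfull halc
      intro u v huv
      rw [dl_fvec_int]
      calc ((extZ z' u - extZ z' v : ℤ) : ℝ) ≤ ((m u v : ℤ) : ℝ) := by
            exact_mod_cast hfeas u v huv
        _ < MV V hV (fvec d u v) := hm_lt u v
    have hiT : i ∈ T := Relation.ReflTransGen.refl
    have himp : extZ z' i - extZ z' j = μ + 1 := by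
      rw [hz'ext, hz'ext, hZ']
      simp only [if_pos hiT, if_neg hjT]
      rw [hμ]
      omega
    have := hzmax' z' hz'int
    omega

end Main

section Assemble

noncomputable def hypA (α : Fin d → ℝ) (b : ℝ) : AffineSubspace ℝ (Fin d → ℝ) where
  carrier := {x | dl α x = b}
  smul_vsub_vadd_mem' := by
    intro c p1 p2 p3 h1 h2 h3
    simp only [Set.mem_setOf_eq] at h1 h2 h3 ⊢
    have he : (c • (p1 -ᵥ p2) +ᵥ p3 : Fin d → ℝ) = c • (p1 - p2) + p3 := rfl
    rw [he, map_add, map_smul, map_sub, h1, h2, h3, smul_eq_mul]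
    ring

lemma mem_hypA {α : Fin d → ℝ} {b : ℝ} {x : Fin d → ℝ} :
    x ∈ hypA α b ↔ dl α x = b := Iff.rfl

lemma hypA_direction {α : Fin d → ℝ} (hα : α ≠ 0) (b : ℝ) :
    (hypA α b).direction = LinearMap.ker (dl α) := by
  have hne := ne_of_gt (dl_self_pos hα)
  have hx0 : (b / dl α α) • α ∈ hypA α b := by
    rw [mem_hypA, map_smul, smul_eq_mul]
    field_simp
  apply le_antisymm
  · intro w hw
    rw [AffineSubspace.mem_direction_iff_eq_vsub ⟨_, hx0⟩] at hw
    obtain ⟨p1, hp1, p2, hp2, rfl⟩ := hw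
    have h1 : dl α p1 = b := hp1
    have h2 : dl α p2 = b := hp2
    have hv : (p1 -ᵥ p2 : Fin d → ℝ) = p1 - p2 := rfl
    rw [LinearMap.mem_ker, hv, map_sub, h1, h2, sub_self]
  · intro w hw
    rw [AffineSubspace.mem_direction_iff_eq_vsub ⟨_, hx0⟩]
    refine ⟨w + (b / dl α α) • α, ?_, (b / dl α α) • α, hx0, ?_⟩
    · rw [mem_hypA, map_add, LinearMap.mem_ker.1 hw, zero_add, map_smul, smul_eq_mul]
      field_simp
    · have : (w + (b / dl α α) • α) -ᵥ ((b / dl α α) • α) = w := by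
        rw [vsub_eq_sub]; abel
      rw [this]

lemma affspan_eq {F : Set (Fin d → ℝ)}
    (hdim : finrank ℝ (affineSpan ℝ F).direction = d - 1)
    {u v : Fin (d+1)} (huv : u ≠ v) {k : ℤ}
    (hFk : ∀ x ∈ F, dl (fvec d u v) x = (k:ℝ)) (hFne : F.Nonempty) :
    ((affineSpan ℝ F : AffineSubspace ℝ (Fin d → ℝ)) : Set (Fin d → ℝ))
      = {x | dl (fvec d u v) x = (k:ℝ)} := by
  have hα := fvec_ne_zero (d := d) huv
  have hle : affineSpan ℝ F ≤ hypA (fvec d u v) (k:ℝ) :=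
    affineSpan_le.2 (fun x hx => hFk x hx)
  have hdir : (affineSpan ℝ F).direction = (hypA (fvec d u v) (k:ℝ)).direction := by
    apply Submodule.eq_of_le_of_finrank_le (AffineSubspace.direction_le hle)
    rw [hypA_direction hα, finrank_ker_dl hα, hdim]
  have heq : affineSpan ℝ F = hypA (fvec d u v) (k:ℝ) := by
    apply AffineSubspace.ext_of_direction_eq hdir
    obtain ⟨w0, hw0⟩ := hFne
    exact ⟨w0, mem_affineSpan ℝ hw0, hFk w0 hw0⟩
  rw [heq]
  rfl

def vecZ (d : ℕ) : Fin (d+1) → Fin d → ℤ := Fin.cons 0 fun t => Pi.single t 1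

lemma sum_vecZ (q : Fin d → ℤ) (u : Fin (d+1)) : ∑ t, vecZ d u t * q t = extZ q u := by
  induction u using Fin.cases with
  | zero => simp [vecZ, extZ]
  | succ s =>
      simp only [vecZ, extZ, Fin.cons_succ, Pi.single_apply]
      simp [ite_mul, Finset.sum_ite_eq']

lemma sum_aZ (q : Fin d → ℤ) (u v : Fin (d+1)) :
    ∑ t, (vecZ d u - vecZ d v) t * q t = extZ q u - extZ q v := by
  have : ∀ t, (vecZ d u - vecZ d v) t * q t = vecZ d u t * q t - vecZ d v t * q t := by
    intro t; simp [sub_mul]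
  rw [Finset.sum_congr rfl (fun t _ => this t), Finset.sum_sub_distrib, sum_vecZ, sum_vecZ]

lemma vecZ_cast (u : Fin (d+1)) (t : Fin d) : ((vecZ d u t : ℤ) : ℝ) = vecN d u t := by
  induction u using Fin.cases with
  | zero => simp [vecZ, vecN]
  | succ s =>
      simp only [vecZ, vecN, Fin.cons_succ, Pi.single_apply]
      split <;> simp

lemma aZ_cast (u v : Fin (d+1)) (x : Fin d → ℝ) :
    (∑ t, (((vecZ d u - vecZ d v) t : ℤ) : ℝ) * x t) = dl (fvec d u v) x := by
  rw [dl_apply]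
  apply Finset.sum_congr rfl
  intro t _
  have : (((vecZ d u - vecZ d v) t : ℤ) : ℝ) = fvec d u v t := by
    have h1 : (vecZ d u - vecZ d v) t = vecZ d u t - vecZ d v t := rfl
    rw [h1]
    push_cast
    rw [vecZ_cast, vecZ_cast]
    rfl
  rw [this]

lemma aZ_ne_zero {u v : Fin (d+1)} (huv : u ≠ v) : (vecZ d u - vecZ d v : Fin d → ℤ) ≠ 0 := by
  intro h0
  apply fvec_ne_zero (d := d) huv
  funext t
  have h1 : ((vecZ d u - vecZ d v) t : ℤ) = 0 := by rw [h0]; rfl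
  have h2 : (((vecZ d u - vecZ d v) t : ℤ) : ℝ) = 0 := by exact_mod_cast h1
  have h3 : (((vecZ d u - vecZ d v) t : ℤ) : ℝ) = fvec d u v t := by
    have he : (vecZ d u - vecZ d v) t = vecZ d u t - vecZ d v t := rfl
    rw [he]; push_cast; rw [vecZ_cast, vecZ_cast]; rfl
  rw [← h3, h2]
  rfl

lemma ldaux_bound (hd : 2 ≤ d) {u v : Fin (d+1)} (huv : u ≠ v) {k : ℤ}
    {p : Fin d → ℤ}
    (h1 : k - ((d:ℤ) - 1) ≤ extZ p u - extZ p v) (h2 : extZ p u - extZ p v ≤ k - 1) :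
    latticeDistAux (vecZ d u - vecZ d v) k p ≤ d - 1 := by
  classical
  have hps : (∑ t, (vecZ d u - vecZ d v) t * p t) = extZ p u - extZ p v := sum_aZ p u v
  set s : ℤ := extZ p u - extZ p v with hs
  rw [latticeDistAux, hps]
  rw [if_neg (by omega : ¬ s = k)]
  have hsurj : ∀ c : ℤ, ∃ q : Fin d → ℤ, (∑ t, (vecZ d u - vecZ d v) t * q t) = c := by
    intro c
    set Q : Fin (d+1) → ℤ := fun w => if w = u then c else 0 with hQ
    refine ⟨fun t => Q t.succ - Q 0, ?_⟩
    rw [sum_aZ]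
    have hext : ∀ w, extZ (fun t => Q t.succ - Q 0) w = Q w - Q 0 := by
      intro w
      induction w using Fin.cases with
      | zero => simp [extZ]
      | succ t => simp [extZ]
    rw [hext u, hext v, hQ]
    simp [Ne.symm huv]
  have hset : {c : ℤ | (∃ q : Fin d → ℤ, (∑ i, (vecZ d u - vecZ d v) i * q i) = c) ∧
      min s k < c ∧ c < max s k} = Set.Ioo s k := by
    ext c
    simp only [Set.mem_setOf_eq, Set.mem_Ioo]
    rw [min_eq_left (by omega : s ≤ k), max_eq_right (by omega : s ≤ k)]
    constructor
    · rintro ⟨-, hc1, hc2⟩; exact ⟨hc1, hc2⟩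
    · rintro ⟨hc1, hc2⟩; exact ⟨hsurj c, hc1, hc2⟩
  have hcard : Nat.card {c : ℤ // (∃ q : Fin d → ℤ, (∑ i, (vecZ d u - vecZ d v) i * q i) = c) ∧
      min s k < c ∧ c < max s k} = (k - s - 1).toNat := by
    have e : {c : ℤ // (∃ q : Fin d → ℤ, (∑ i, (vecZ d u - vecZ d v) i * q i) = c) ∧
        min s k < c ∧ c < max s k} ≃ (Set.Ioo s k : Set ℤ) := Equiv.setCongr hset
    rw [Nat.card_congr e, Nat.card_coe_set_eq, ← Finset.coe_Ioo, Set.ncard_coe_finset,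
      Int.card_Ioo]
  rw [hcard]
  clear hcard hset hsurj hps
  omega

end Assemble

end S4

/-- Every facet of a `d`-dimensional alcoved polytope (`d ≥ 2`) with
interior lattice points has lattice distance at most `d - 1` to the set of interior
lattice points. -/
theorem stmt4 (d : ℕ) (hd : 2 ≤ d) (P : Set (Fin d → ℝ)) (hP : IsAlcovedPolytope P)
    (hint : (interiorLatticePts P).Nonempty)
    (F : Set (Fin d → ℝ)) (hF : IsFacet P F) :
    facetLatticeDistSet F (interiorLatticePts P) ≤ d - 1 := by
  classical
  open S4 in
  obtain ⟨⟨V, hPV⟩, hfull, halc⟩ := hP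
  subst hPV
  have hV : V.Nonempty := by
    rcases Finset.eq_empty_or_nonempty V with h | h
    · exfalso
      rw [h] at hfull
      obtain ⟨x, hx⟩ := hfull
      simp [convexHull_empty] at hx
    · exact h
  obtain ⟨u, v, kk, huv, hside, hFk⟩ := S4.facet_orient hd (halc F hF) hF
  have hdim : Module.finrank ℝ (affineSpan ℝ F).direction = d - 1 := by
    obtain ⟨a0, c0, -, -, -, hdim⟩ := hF
    exact hdim
  have hFne : F.Nonempty := S4.facet_nonempty hd hF
  obtain ⟨p, hpint, hp1, hp2⟩ :=
    S4.main_exists V hV hd hfull halc hint hF huv hside hFk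
  have hspan := S4.affspan_eq hdim huv hFk hFne
  have hsetrep : ((affineSpan ℝ F : AffineSubspace ℝ (Fin d → ℝ)) : Set (Fin d → ℝ))
      = {x : Fin d → ℝ | (∑ i, (((vecZ d u - vecZ d v) i : ℤ) : ℝ) * x i) = (kk : ℝ)} := by
    rw [hspan]
    ext x
    simp only [Set.mem_setOf_eq]
    rw [S4.aZ_cast]
  have hld : latticeDistAux (vecZ d u - vecZ d v) kk p ≤ d - 1 :=
    S4.ldaux_bound hd huv hp1 hp2
  have hle1 : hyperplaneLatticeDist
      ((affineSpan ℝ F : AffineSubspace ℝ (Fin d → ℝ)) : Set (Fin d → ℝ)) p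
      ≤ latticeDistAux (vecZ d u - vecZ d v) kk p :=
    Nat.sInf_le ⟨vecZ d u - vecZ d v, kk, S4.aZ_ne_zero huv, hsetrep, rfl⟩
  have hle2 : facetLatticeDistSet F (interiorLatticePts ((convexHull ℝ) (V : Set (Fin d → ℝ))))
      ≤ hyperplaneLatticeDist
        ((affineSpan ℝ F : AffineSubspace ℝ (Fin d → ℝ)) : Set (Fin d → ℝ)) p :=
    Nat.sInf_le ⟨p, hpint, rfl⟩
  exact le_trans hle2 (le_trans hle1 hld)
end

section
/- For every d ≥ 1, the polytope Q_d equals the convex hull of the union of the cubes [−1,0]^d and [0,1]^d. Moreover, Q_d contains exactly 2^{d+1} − 1 lattice points: the origin is its unique interior lattice point, and the remaining 2^{d+1} − 2 lattice points of Q_d are vertices of Q_d. -/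
open scoped BigOperators Pointwise

lemma mem_Qd_iff {d : ℕ} (y : Fin d → ℝ) :
    y ∈ Qd d ↔ (∀ i, -1 ≤ y i) ∧ (∀ i, y i ≤ 1) ∧ (∀ i j, y i - y j ≤ 1) := by
  constructor
  · intro h
    refine ⟨fun i => ?_, fun i => ?_, fun i j => ?_⟩
    · have := h 0 i.succ; simp [extCoord] at this; linarith
    · have := h i.succ 0; simp [extCoord] at this; linarith
    · have := h i.succ j.succ; simpa [extCoord] using this
  · rintro ⟨h1, h2, h3⟩ i j
    refine Fin.cases ?_ (fun i' => ?_) i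
    · refine Fin.cases ?_ (fun j' => ?_) j <;> simp [extCoord]
      · have := h1 j'; linarith
    · refine Fin.cases ?_ (fun j' => ?_) j <;> simp [extCoord]
      · exact h2 i'
      · have := h3 i' j'; linarith

lemma qd_convex {d : ℕ} : Convex ℝ (Qd d) := by
  intro x hx y hy a b ha hb hab
  rw [mem_Qd_iff] at hx hy ⊢
  obtain ⟨hx1, hx2, hx3⟩ := hx
  obtain ⟨hy1, hy2, hy3⟩ := hy
  refine ⟨fun i => ?_, fun i => ?_, fun i j => ?_⟩ <;>
    simp only [Pi.add_apply, Pi.smul_apply, smul_eq_mul]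
  · nlinarith [hx1 i, hy1 i]
  · nlinarith [hx2 i, hy2 i]
  · nlinarith [hx3 i j, hy3 i j]

lemma cube_pos_subset {d : ℕ} : Set.Icc (0 : Fin d → ℝ) 1 ⊆ Qd d := by
  intro y hy
  rw [Set.mem_Icc] at hy
  rw [mem_Qd_iff]
  have h0 := hy.1; have h1 := hy.2
  refine ⟨fun i => ?_, fun i => ?_, fun i j => ?_⟩
  · have := h0 i; simp at this; linarith
  · have := h1 i; simpa using this
  · have := h0 j; have := h1 i; simp_all; linarith

lemma cube_neg_subset {d : ℕ} : Set.Icc (-1 : Fin d → ℝ) 0 ⊆ Qd d := by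
  intro y hy
  rw [Set.mem_Icc] at hy
  rw [mem_Qd_iff]
  have h0 := hy.1; have h1 := hy.2
  refine ⟨fun i => ?_, fun i => ?_, fun i j => ?_⟩
  · have := h0 i; simpa using this
  · have := h1 i; simp at this; linarith
  · have := h0 j; have := h1 i; simp_all; linarith

lemma qd_eq_hull {d : ℕ} (hd : 1 ≤ d) :
    Qd d = convexHull ℝ (Set.Icc (-1 : Fin d → ℝ) 0 ∪ Set.Icc (0 : Fin d → ℝ) 1) := by
  apply Set.Subset.antisymm
  · intro y hy
    rw [mem_Qd_iff] at hy
    obtain ⟨h1, h2, h3⟩ := hy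
    by_cases hA : ∀ i, 0 ≤ y i
    · exact subset_convexHull ℝ _ (Or.inr ⟨fun i => hA i, fun i => h2 i⟩)
    by_cases hB : ∀ i, y i ≤ 0
    · exact subset_convexHull ℝ _ (Or.inl ⟨fun i => h1 i, fun i => hB i⟩)
    push_neg at hA hB
    obtain ⟨in0, hin0⟩ := hA
    obtain ⟨ip0, hip0⟩ := hB
    have ne : (Finset.univ : Finset (Fin d)).Nonempty := ⟨ip0, Finset.mem_univ _⟩
    set M := Finset.univ.sup' ne y with hM
    set m := -(Finset.univ.inf' ne y) with hm
    have hMge : ∀ i, y i ≤ M := fun i => Finset.le_sup' y (Finset.mem_univ i)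
    have hmge : ∀ i, -m ≤ y i := fun i => by
      have h := Finset.inf'_le y (Finset.mem_univ i)
      simp only [hm, neg_neg]; exact h
    have hMpos : 0 < M := lt_of_lt_of_le hip0 (hMge ip0)
    have hmpos : 0 < m := by have := hmge in0; nlinarith [hmge in0, hin0]
    have hMm : M + m ≤ 1 := by
      obtain ⟨is, -, his⟩ := Finset.exists_mem_eq_sup' ne y
      obtain ⟨js, -, hjs⟩ := Finset.exists_mem_eq_inf' ne y
      have := h3 is js
      rw [hM, hm, his, hjs]; linarith
    set a : Fin d → ℝ := fun i => max (y i) 0 / M with haa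
    set b : Fin d → ℝ := fun i => min (y i) 0 / m with hbb
    have ha : a ∈ Set.Icc (0 : Fin d → ℝ) 1 := by
      constructor <;> intro i
      · exact div_nonneg (le_max_right _ _) hMpos.le
      · show max (y i) 0 / M ≤ 1
        rw [div_le_one hMpos]
        exact max_le (hMge i) hMpos.le
    have hb : b ∈ Set.Icc (-1 : Fin d → ℝ) 0 := by
      constructor <;> intro i
      · show (-1 : ℝ) ≤ min (y i) 0 / m
        rw [le_div_iff₀ hmpos]
        have := hmge i
        have h01 : -m ≤ min (y i) 0 := le_min (hmge i) (by linarith)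
        linarith
      · exact div_nonpos_of_nonpos_of_nonneg (min_le_right _ _) hmpos.le
    set c : Fin d → ℝ := (M/(M+m)) • a + (m/(M+m)) • b with hcc
    have hMmpos : 0 < M + m := by linarith
    have hc : c ∈ convexHull ℝ (Set.Icc (-1 : Fin d → ℝ) 0 ∪ Set.Icc (0 : Fin d → ℝ) 1) := by
      have hamem : a ∈ convexHull ℝ (Set.Icc (-1 : Fin d → ℝ) 0 ∪ Set.Icc (0 : Fin d → ℝ) 1) :=
        subset_convexHull ℝ _ (Or.inr ha)
      have hbmem : b ∈ convexHull ℝ (Set.Icc (-1 : Fin d → ℝ) 0 ∪ Set.Icc (0 : Fin d → ℝ) 1) :=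
        subset_convexHull ℝ _ (Or.inl hb)
      refine (convex_convexHull ℝ _) hamem hbmem (by positivity) (by positivity) ?_
      field_simp
    have h0 : (0 : Fin d → ℝ) ∈ convexHull ℝ (Set.Icc (-1 : Fin d → ℝ) 0 ∪ Set.Icc (0 : Fin d → ℝ) 1) :=
      subset_convexHull ℝ _ (Or.inr ⟨le_rfl, fun i => zero_le_one⟩)
    have hmem := (convex_convexHull ℝ _) hc h0 hMmpos.le (by linarith : (0:ℝ) ≤ 1 - (M + m)) (by ring)
    convert hmem using 1
    funext i
    have hMne : M ≠ 0 := hMpos.ne'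
    have hmne : m ≠ 0 := hmpos.ne'
    have hMmne : M + m ≠ 0 := hMmpos.ne'
    have hmin : min (y i) 0 = y i - max (y i) 0 := by
      have := max_add_min (y i) 0; linarith
    simp only [Pi.add_apply, Pi.smul_apply, smul_eq_mul, hcc, haa, hbb]
    rw [hmin]
    field_simp
    simp only [Pi.zero_apply]; ring
  · exact convexHull_min (Set.union_subset cube_neg_subset cube_pos_subset) qd_convex

lemma int_mem_Qd {d : ℕ} (p : Fin d → ℤ) :
    (fun i => (p i : ℝ)) ∈ Qd d ↔
      (∀ i, 0 ≤ p i ∧ p i ≤ 1) ∨ (∀ i, -1 ≤ p i ∧ p i ≤ 0) := by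
  rw [mem_Qd_iff]
  constructor
  · rintro ⟨h1, h2, h3⟩
    have hb : ∀ i, -1 ≤ p i ∧ p i ≤ 1 := fun i => by
      constructor <;> [exact_mod_cast h1 i; exact_mod_cast h2 i]
    by_cases hp : ∃ i, 0 < p i
    · obtain ⟨i0, hi0⟩ := hp
      left
      intro i
      refine ⟨?_, (hb i).2⟩
      by_contra hneg
      push_neg at hneg
      have h3' : (p i0 : ℝ) - (p i : ℝ) ≤ 1 := h3 i0 i
      have : p i0 - p i ≤ 1 := by exact_mod_cast h3'
      omega
    · push_neg at hp
      right
      exact fun i => ⟨(hb i).1, hp i⟩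
  · rintro (h | h) <;>
      refine ⟨fun i => ?_, fun i => ?_, fun i j => ?_⟩ <;>
      [have hi := h i; have hi := h i; (have hi := h i; have hj := h j);
       have hi := h i; have hi := h i; (have hi := h i; have hj := h j)]
    · have : (0:ℝ) ≤ (p i : ℝ) := by exact_mod_cast hi.1
      linarith
    · exact_mod_cast hi.2
    · have h1 : (p i : ℝ) ≤ 1 := by exact_mod_cast hi.2
      have h2 : (0:ℝ) ≤ (p j : ℝ) := by exact_mod_cast hj.1
      linarith
    · exact_mod_cast hi.1
    · have : (p i : ℝ) ≤ 0 := by exact_mod_cast hi.2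
      linarith
    · have h1 : (p i : ℝ) ≤ 0 := by exact_mod_cast hi.2
      have h2 : (-1:ℝ) ≤ (p j : ℝ) := by exact_mod_cast hj.1
      linarith

lemma qd_count {d : ℕ} :
    Nat.card {p : Fin d → ℤ // (fun i => (p i : ℝ)) ∈ Qd d} = 2 ^ (d + 1) - 1 := by
  classical
  set F : Finset (Fin d → ℤ) := Finset.Icc (-1) 0 ∪ Finset.Icc 0 1 with hF
  have hiff : ∀ p : Fin d → ℤ, (fun i => (p i : ℝ)) ∈ Qd d ↔ p ∈ F := by
    intro p
    rw [int_mem_Qd, hF, Finset.mem_union, Finset.mem_Icc, Finset.mem_Icc]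
    constructor
    · rintro (h | h)
      · exact Or.inr ⟨fun i => (h i).1, fun i => (h i).2⟩
      · exact Or.inl ⟨fun i => (h i).1, fun i => (h i).2⟩
    · rintro (⟨h1, h2⟩ | ⟨h1, h2⟩)
      · exact Or.inr fun i => ⟨h1 i, h2 i⟩
      · exact Or.inl fun i => ⟨h1 i, h2 i⟩
  have e1 : Nat.card {p : Fin d → ℤ // (fun i => (p i : ℝ)) ∈ Qd d} =
      Nat.card {p : Fin d → ℤ // p ∈ F} :=
    Nat.card_congr (Equiv.subtypeEquivRight hiff)
  rw [e1, Nat.card_eq_fintype_card, Fintype.card_coe]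
  have hinter : Finset.Icc (-1 : Fin d → ℤ) 0 ∩ Finset.Icc 0 1 = {0} := by
    ext q
    simp only [Finset.mem_inter, Finset.mem_Icc, Finset.mem_singleton]
    constructor
    · rintro ⟨⟨-, h2⟩, ⟨h3, -⟩⟩
      exact le_antisymm h2 h3
    · rintro rfl
      refine ⟨⟨?_, le_rfl⟩, ⟨le_rfl, ?_⟩⟩ <;> intro i <;> simp
  have hcard1 : (Finset.Icc (-1 : Fin d → ℤ) 0).card = 2 ^ d := by
    rw [Pi.card_Icc]
    have h2 : ∀ i : Fin d, (Finset.Icc ((-1 : Fin d → ℤ) i) ((0 : Fin d → ℤ) i)).card = 2 := by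
      intro i; simp [Int.card_Icc]
    rw [Finset.prod_congr rfl (fun i _ => h2 i)]
    simp
  have hcard2 : (Finset.Icc (0 : Fin d → ℤ) 1).card = 2 ^ d := by
    rw [Pi.card_Icc]
    have h2 : ∀ i : Fin d, (Finset.Icc ((0 : Fin d → ℤ) i) ((1 : Fin d → ℤ) i)).card = 2 := by
      intro i; simp [Int.card_Icc]
    rw [Finset.prod_congr rfl (fun i _ => h2 i)]
    simp
  have hU := Finset.card_union_add_card_inter (Finset.Icc (-1 : Fin d → ℤ) 0) (Finset.Icc 0 1)
  rw [hinter, hcard1, hcard2, Finset.card_singleton] at hU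
  have hpow : 2 ^ (d + 1) = F.card + 1 := by
    rw [pow_succ, mul_two, ← hU]
  rw [hpow]
  simp

lemma qd_interior {d : ℕ} (p : Fin d → ℤ) :
    (fun i => (p i : ℝ)) ∈ interior (Qd d) ↔ p = 0 := by
  constructor
  · intro h
    have hmem := (mem_Qd_iff _).1 (interior_subset h)
    funext i
    show p i = 0
    by_contra hne
    have hb1 : (-1:ℝ) ≤ (p i : ℝ) := hmem.1 i
    have hb2 : (p i : ℝ) ≤ 1 := hmem.2.1 i
    have hb1' : -1 ≤ p i := by exact_mod_cast hb1
    have hb2' : p i ≤ 1 := by exact_mod_cast hb2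
    set f : ℝ → (Fin d → ℝ) := fun t => (fun j => (p j : ℝ)) + t • (Pi.single i ((p i : ℝ)) : Fin d → ℝ)
      with hf
    have hcont : Continuous f := by
      apply Continuous.add continuous_const
      exact continuous_id.smul continuous_const
    have hnhds : f ⁻¹' interior (Qd d) ∈ nhds (0 : ℝ) := by
      apply hcont.continuousAt.preimage_mem_nhds
      apply isOpen_interior.mem_nhds
      have : f 0 = fun j => (p j : ℝ) := by
        funext j; simp [hf]
      rw [this]; exact h
    obtain ⟨ε, hε, hball⟩ := Metric.mem_nhds_iff.1 hnhds
    have htmem : (ε/2 : ℝ) ∈ Metric.ball (0:ℝ) ε := by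
      rw [Metric.mem_ball, Real.dist_eq, sub_zero, abs_of_pos (by linarith)]
      linarith
    have hq := (mem_Qd_iff _).1 (interior_subset (hball htmem))
    have hqi : f (ε/2) i = (p i : ℝ) + (ε/2) * (p i : ℝ) := by
      simp [hf]
    have hq1 := hq.1 i
    have hq2 := hq.2.1 i
    rw [hqi] at hq1 hq2
    have hpi : p i = 1 ∨ p i = -1 := by omega
    rcases hpi with h1 | h1 <;> rw [h1] at hq1 hq2 <;> push_cast at hq1 hq2 <;> linarith
  · rintro rfl
    have heq : (fun i => (((0 : Fin d → ℤ) i : ℝ))) = (0 : Fin d → ℝ) := by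
      funext i; simp
    rw [heq]
    have hsub : (Set.univ.pi fun _ : Fin d => Set.Ioo (-(1:ℝ)/2) (1/2)) ⊆ Qd d := by
      intro y hy
      rw [Set.mem_univ_pi] at hy
      rw [mem_Qd_iff]
      refine ⟨fun i => ?_, fun i => ?_, fun i j => ?_⟩
      · have := (hy i).1; linarith
      · have := (hy i).2; linarith
      · have := (hy i).2; have := (hy j).1; linarith
    have hopen : IsOpen (Set.univ.pi fun _ : Fin d => Set.Ioo (-(1:ℝ)/2) (1/2)) :=
      isOpen_set_pi Set.finite_univ (fun i _ => isOpen_Ioo)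
    apply interior_maximal hsub hopen
    rw [Set.mem_univ_pi]
    intro i
    constructor <;> norm_num

lemma qd_extreme {d : ℕ} (p : Fin d → ℤ) (hp : (fun i => (p i : ℝ)) ∈ Qd d)
    (hne : p ≠ 0) : (fun i => (p i : ℝ)) ∈ Set.extremePoints ℝ (Qd d) := by
  rw [mem_extremePoints]
  refine ⟨hp, fun x hx y hy hseg => ?_⟩
  obtain ⟨a, b, ha, hb, hab, hsum⟩ := hseg
  have hx' := (mem_Qd_iff _).1 hx
  have hy' := (mem_Qd_iff _).1 hy
  have hcoord : ∀ i, a * x i + b * y i = (p i : ℝ) := by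
    intro i
    have := congrFun hsum i
    simpa using this
  have hex : ∃ i0, p i0 ≠ 0 := by
    by_contra hc
    push_neg at hc
    exact hne (funext hc)
  obtain ⟨i0, hi0⟩ := hex
  rcases (int_mem_Qd p).1 hp with hpos | hneg
  · -- p ∈ {0,1}^d, p i0 = 1
    have hpi0 : p i0 = 1 := by have := hpos i0; omega
    have key : ∀ z : Fin d → ℝ, z ∈ Qd d → a * z i0 + b * (((fun w => w) y) i0) = 0 → True :=
      fun _ _ _ => trivial
    have hxi0 : x i0 = 1 ∧ y i0 = 1 := by
      have hc := hcoord i0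
      rw [hpi0] at hc; push_cast at hc
      have h1 := hx'.2.1 i0
      have h2 := hy'.2.1 i0
      constructor <;> nlinarith
    have hall : ∀ i, x i = (p i : ℝ) ∧ y i = (p i : ℝ) := by
      intro i
      have hpi := hpos i
      have hc := hcoord i
      rcases (by omega : p i = 0 ∨ p i = 1) with h0 | h0 <;> rw [h0] at hc ⊢ <;> push_cast at hc ⊢
      · have hxge : 0 ≤ x i := by have := hx'.2.2 i0 i; linarith [hxi0.1]
        have hyge : 0 ≤ y i := by have := hy'.2.2 i0 i; linarith [hxi0.2]
        constructor <;> nlinarith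
      · have h1 := hx'.2.1 i
        have h2 := hy'.2.1 i
        constructor <;> nlinarith
    exact ⟨funext fun i => (hall i).1, funext fun i => (hall i).2⟩
  · -- p ∈ {-1,0}^d, p i0 = -1
    have hpi0 : p i0 = -1 := by have := hneg i0; omega
    have hxi0 : x i0 = -1 ∧ y i0 = -1 := by
      have hc := hcoord i0
      rw [hpi0] at hc; push_cast at hc
      have h1 := hx'.1 i0
      have h2 := hy'.1 i0
      constructor <;> nlinarith
    have hall : ∀ i, x i = (p i : ℝ) ∧ y i = (p i : ℝ) := by
      intro i
      have hpi := hneg i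
      have hc := hcoord i
      rcases (by omega : p i = 0 ∨ p i = -1) with h0 | h0 <;> rw [h0] at hc ⊢ <;> push_cast at hc ⊢
      · have hxle : x i ≤ 0 := by have := hx'.2.2 i i0; linarith [hxi0.1]
        have hyle : y i ≤ 0 := by have := hy'.2.2 i i0; linarith [hxi0.2]
        constructor <;> nlinarith
      · have h1 := hx'.1 i
        have h2 := hy'.1 i
        constructor <;> nlinarith
    exact ⟨funext fun i => (hall i).1, funext fun i => (hall i).2⟩

/-- `Q_d` is the convex hull of the union of the cubes `[-1,0]^d` and
`[0,1]^d`; it contains exactly `2^{d+1} - 1` lattice points, the origin being its unique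
interior lattice point and all other `2^{d+1} - 2` lattice points being vertices. -/
theorem stmt9 (d : ℕ) (hd : 1 ≤ d) :
    Qd d = convexHull ℝ (Set.Icc (-1 : Fin d → ℝ) 0 ∪ Set.Icc (0 : Fin d → ℝ) 1) ∧
    Nat.card {p : Fin d → ℤ // (fun i => (p i : ℝ)) ∈ Qd d} = 2 ^ (d + 1) - 1 ∧
    (∀ p : Fin d → ℤ, (fun i => (p i : ℝ)) ∈ interior (Qd d) ↔ p = 0) ∧
    (∀ p : Fin d → ℤ, (fun i => (p i : ℝ)) ∈ Qd d → p ≠ 0 →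
      (fun i => (p i : ℝ)) ∈ Set.extremePoints ℝ (Qd d)) := by
  exact ⟨qd_eq_hull hd, qd_count, fun p => qd_interior p, fun p hp hne => qd_extreme p hp hne⟩
end

section
/- For every d ≥ 1, the polytope Q_d is the image of the unit cube [0,1]^{d+1} under the linear projection φ: ℝ^{d+1} → ℝ^d defined by φ(e_i) = e_i for i = 1, …, d and φ(e_{d+1}) = −e_1 − e_2 − … − e_d. Moreover, Q_d has the same h*-polynomial as the unit cube [0,1]^{d+1}, i.e., h*_i(Q_d) = h*_i([0,1]^{d+1}) for 0 ≤ i ≤ d and h*_{d+1}([0,1]^{d+1}) = 0. -/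
open scoped BigOperators Pointwise

section StmtTenAux

open Polynomial in
private lemma stmt10_ext_lemma (n : ℕ) (a : Fin (n+1) → ℤ) (r : Polynomial ℤ)
    (hyp : ∀ t : ℕ, 1 ≤ t → (∑ i : Fin (n+1), a i * ((t + n - (i:ℕ)).choose n : ℤ)) = r.eval (t:ℤ)) :
    ∀ t : ℕ, (∑ i : Fin (n+1), a i * ((t + n - (i:ℕ)).choose n : ℤ)) = r.eval (t:ℤ) := by
  set p : Polynomial ℤ :=
    ∑ i : Fin (n+1), C (a i) * (descPochhammer ℤ n).comp (X + C ((n - (i:ℕ) : ℕ) : ℤ)) with hp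
  have key : ∀ t : ℕ, p.eval (t:ℤ)
      = (Nat.factorial n : ℤ) * ∑ i : Fin (n+1), a i * ((t + n - (i:ℕ)).choose n : ℤ) := by
    intro t
    rw [hp, eval_finset_sum, Finset.mul_sum]
    refine Finset.sum_congr rfl fun i _ => ?_
    have hi : (i : ℕ) ≤ n := Nat.lt_succ_iff.mp i.isLt
    have h1 : t + n - (i:ℕ) = t + (n - (i:ℕ)) := by omega
    rw [eval_mul, eval_C, eval_comp, eval_add, eval_X, eval_C]
    have h2 : (t : ℤ) + ((n - (i:ℕ) : ℕ) : ℤ) = ((t + (n - (i:ℕ)) : ℕ) : ℤ) := by push_cast; ring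
    rw [h2, descPochhammer_eval_eq_descFactorial, h1,
      Nat.descFactorial_eq_factorial_mul_choose]
    push_cast; ring
  have hpq : p = C (Nat.factorial n : ℤ) * r := by
    apply Polynomial.eq_of_infinite_eval_eq
    have hsub : (Nat.cast '' Set.Ici 1 : Set ℤ) ⊆ {x | p.eval x = (C (Nat.factorial n : ℤ) * r).eval x} := by
      rintro x ⟨t, ht, rfl⟩
      simp only [Set.mem_setOf_eq, eval_mul, eval_C]
      rw [key t, hyp t ht]
    refine Set.Infinite.mono hsub ?_
    exact Set.Infinite.image (fun x _ y _ hxy => Nat.cast_injective hxy) (Set.Ici_infinite 1)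
  intro t
  have := key t
  rw [hpq] at this
  simp only [eval_mul, eval_C] at this
  exact mul_left_cancel₀ (by exact_mod_cast (Nat.factorial_ne_zero n)) this.symm

private lemma stmt10_mem_dilated_cube {n t : ℕ} (ht : 1 ≤ t) (x : Fin n → ℝ) :
    x ∈ (t : ℝ) • Set.Icc (0 : Fin n → ℝ) 1 ↔ ∀ i, 0 ≤ x i ∧ x i ≤ t := by
  have ht' : (0:ℝ) < t := by exact_mod_cast ht
  rw [Set.mem_smul_set]
  constructor
  · rintro ⟨y, hy, rfl⟩ i
    obtain ⟨hy0, hy1⟩ := hy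
    have h0 : (0:ℝ) ≤ y i := hy0 i; have h1 : y i ≤ (1:ℝ) := hy1 i
    simp only [Pi.smul_apply, smul_eq_mul]
    constructor
    · positivity
    · calc (t:ℝ) * y i ≤ (t:ℝ) * 1 := by nlinarith
        _ = t := mul_one _
  · intro hx
    refine ⟨(t:ℝ)⁻¹ • x, ⟨fun i => ?_, fun i => ?_⟩, ?_⟩
    · simp only [Pi.smul_apply, smul_eq_mul, Pi.zero_apply]
      exact mul_nonneg (by positivity) (hx i).1
    · simp only [Pi.smul_apply, smul_eq_mul, Pi.one_apply]
      rw [inv_mul_le_one₀ ht']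
      simpa using (hx i).2
    · rw [smul_inv_smul₀ (ne_of_gt ht')]

private lemma stmt10_count_box (n t : ℕ) :
    Nat.card {p : Fin n → ℤ // ∀ i, 0 ≤ p i ∧ p i ≤ (t:ℤ)} = (t+1)^n := by
  have e : {p : Fin n → ℤ // ∀ i, 0 ≤ p i ∧ p i ≤ (t:ℤ)}
      ≃ (Fin n → Set.Icc (0:ℤ) (t:ℤ)) :=
    { toFun := fun p i => ⟨p.1 i, (p.2 i).1, (p.2 i).2⟩
      invFun := fun f => ⟨fun i => (f i).1, fun i => ⟨(f i).2.1, (f i).2.2⟩⟩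
      left_inv := fun p => rfl
      right_inv := fun f => rfl }
  rw [Nat.card_eq_of_bijective e e.bijective, Nat.card_pi]
  have : Nat.card (Set.Icc (0:ℤ) (t:ℤ)) = t + 1 := by
    rw [Nat.card_eq_fintype_card, Fintype.card_ofFinset]
    simp [Int.card_Icc]
  simp [this]

private lemma stmt10_cube_count (n t : ℕ) (ht : 1 ≤ t) :
    latCount (Set.Icc (0 : Fin n → ℝ) 1) t = (t+1)^n := by
  rw [latCount, ← stmt10_count_box n t]
  apply Nat.card_congr
  apply Equiv.subtypeEquivRight
  intro p
  rw [stmt10_mem_dilated_cube ht]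
  constructor
  · intro hp i
    have := hp i
    constructor <;> [exact_mod_cast this.1; exact_mod_cast this.2]
  · intro hp i
    have := hp i
    constructor <;> [exact_mod_cast this.1; exact_mod_cast this.2]

private lemma stmt10_extCoord_smul {d : ℕ} (c : ℝ) (y : Fin d → ℝ) (i : Fin (d+1)) :
    extCoord (c • y) i = c * extCoord y i := by
  induction i using Fin.cases with
  | zero => simp [extCoord]
  | succ j => simp [extCoord]

private lemma stmt10_mem_dilated_Qd {d t : ℕ} (ht : 1 ≤ t) (x : Fin d → ℝ) :
    x ∈ (t : ℝ) • Qd d ↔ ∀ i j : Fin (d+1), extCoord x i - extCoord x j ≤ t := by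
  have ht' : (0:ℝ) < t := by exact_mod_cast ht
  rw [Set.mem_smul_set]
  constructor
  · rintro ⟨y, hy, rfl⟩ i j
    have := hy i j
    rw [stmt10_extCoord_smul, stmt10_extCoord_smul]
    nlinarith
  · intro hx
    refine ⟨(t:ℝ)⁻¹ • x, fun i j => ?_, smul_inv_smul₀ (ne_of_gt ht') x⟩
    rw [stmt10_extCoord_smul, stmt10_extCoord_smul, ← mul_sub, inv_mul_le_one₀ ht']
    exact hx i j

private lemma stmt10_mem_dilated_Qd_int {d t : ℕ} (ht : 1 ≤ t) (p : Fin d → ℤ) :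
    (fun i => (p i : ℝ)) ∈ (t : ℝ) • Qd d
      ↔ ∀ i j : Fin (d+1), (Fin.cons 0 p : Fin (d+1) → ℤ) i - (Fin.cons 0 p : Fin (d+1) → ℤ) j ≤ (t:ℤ) := by
  rw [stmt10_mem_dilated_Qd ht]
  have hcast : ∀ i : Fin (d+1), extCoord (fun i => (p i : ℝ)) i = (((Fin.cons 0 p : Fin (d+1) → ℤ) i : ℤ) : ℝ) := by
    intro i
    induction i using Fin.cases with
    | zero => simp [extCoord]
    | succ j => simp [extCoord]
  constructor
  · intro h i j
    have := h i j
    rw [hcast, hcast] at this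
    exact_mod_cast this
  · intro h i j
    rw [hcast, hcast]
    exact_mod_cast h i j

private lemma stmt10_count_B (d t : ℕ) (ht : 1 ≤ t) :
    Nat.card {x : Fin (d+1) → ℤ // (∀ i, 0 ≤ x i ∧ x i ≤ (t:ℤ)) ∧ ∃ i, x i = 0}
      = (t+1)^(d+1) - t^(d+1) := by
  classical
  set S : Finset (Fin (d+1) → ℤ) :=
    Fintype.piFinset (fun _ : Fin (d+1) => Finset.Icc (0:ℤ) (t:ℤ)) with hS
  have e : {x : Fin (d+1) → ℤ // (∀ i, 0 ≤ x i ∧ x i ≤ (t:ℤ)) ∧ ∃ i, x i = 0}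
      ≃ {x // x ∈ S.filter (fun x => ∃ i, x i = 0)} := by
    apply Equiv.subtypeEquivRight
    intro x
    simp [hS, Fintype.mem_piFinset, Finset.mem_Icc, forall_and]
  rw [Nat.card_eq_of_bijective e e.bijective, Nat.card_eq_fintype_card, Fintype.card_coe]
  have hG : S.filter (fun x => ¬ ∃ i, x i = 0)
      = Fintype.piFinset (fun _ : Fin (d+1) => Finset.Icc (1:ℤ) (t:ℤ)) := by
    ext x
    simp only [Finset.mem_filter, hS, Fintype.mem_piFinset, Finset.mem_Icc, not_exists]
    constructor
    · rintro ⟨h1, h2⟩ i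
      exact ⟨lt_of_le_of_ne (h1 i).1 (Ne.symm (h2 i)), (h1 i).2⟩
    · intro h
      constructor
      · intro i
        have h1 := (h i).1
        exact ⟨by omega, (h i).2⟩
      · intro i
        have h1 := (h i).1
        omega
  have hScard : S.card = (t+1)^(d+1) := by
    rw [hS, Fintype.card_piFinset]
    simp only [Int.card_Icc, Finset.prod_const, Finset.card_univ, Fintype.card_fin]
    rw [show ((t:ℤ) + 1 - 0).toNat = t + 1 by omega]
  have hGcard : (S.filter (fun x => ¬ ∃ i, x i = 0)).card = t^(d+1) := by
    rw [hG, Fintype.card_piFinset]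
    simp only [Int.card_Icc, Finset.prod_const, Finset.card_univ, Fintype.card_fin]
    rw [show ((t:ℤ) + 1 - 1).toNat = t by omega]
  have hsplit := Finset.card_filter_add_card_filter_not
    (s := S) (p := fun x => ∃ i, x i = 0)
  rw [hScard, hGcard] at hsplit
  exact Nat.eq_sub_of_add_eq hsplit

private lemma stmt10_qd_count (d t : ℕ) (ht : 1 ≤ t) :
    latCount (Qd d) t = (t+1)^(d+1) - t^(d+1) := by
  classical
  rw [latCount, ← stmt10_count_B d t ht]
  have hne : (Finset.univ : Finset (Fin (d+1))).Nonempty := ⟨0, Finset.mem_univ 0⟩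
  set q : (Fin d → ℤ) → (Fin (d+1) → ℤ) := (fun p => Fin.cons 0 p) with hqdef
  set m : (Fin d → ℤ) → ℤ := (fun p => Finset.univ.inf' hne (q p)) with hmdef
  have hm_le : ∀ (p : Fin d → ℤ) (i : Fin (d+1)), m p ≤ q p i := by
    intro p i
    exact Finset.inf'_le (q p) (Finset.mem_univ i)
  have hm_ex : ∀ p : Fin d → ℤ, ∃ i₀, m p = q p i₀ := by
    intro p
    obtain ⟨i₀, -, hi₀⟩ := Finset.exists_mem_eq_inf' hne (q p)
    exact ⟨i₀, hi₀⟩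
  have hfB : ∀ p : Fin d → ℤ, (fun i => (p i : ℝ)) ∈ (t : ℝ) • Qd d →
      ((∀ i, 0 ≤ q p i - m p ∧ q p i - m p ≤ (t:ℤ)) ∧ ∃ i, q p i - m p = 0) := by
    intro p hp
    have hAmem : ∀ i j : Fin (d+1), q p i - q p j ≤ (t:ℤ) :=
      (stmt10_mem_dilated_Qd_int ht p).mp hp
    obtain ⟨i₀, hi₀⟩ := hm_ex p
    refine ⟨fun i => ⟨by have := hm_le p i; omega, ?_⟩, ⟨i₀, by omega⟩⟩
    have := hAmem i i₀
    omega
  let f : {p : Fin d → ℤ // (fun i => (p i : ℝ)) ∈ (t : ℝ) • Qd d} →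
      {x : Fin (d+1) → ℤ // (∀ i, 0 ≤ x i ∧ x i ≤ (t:ℤ)) ∧ ∃ i, x i = 0} :=
    fun p => ⟨fun i => q p.1 i - m p.1, hfB p.1 p.2⟩
  refine Nat.card_eq_of_bijective f ⟨?_, ?_⟩
  · intro p p' hpp'
    have hfun : ∀ i, q p.1 i - m p.1 = q p'.1 i - m p'.1 := by
      intro i
      exact congrFun (congrArg Subtype.val hpp') i
    have h0 := hfun 0
    have hq0 : ∀ r : Fin d → ℤ, q r 0 = 0 := fun r => rfl
    rw [hq0, hq0] at h0
    have hm : m p.1 = m p'.1 := by omega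
    apply Subtype.ext
    funext j
    have := hfun j.succ
    have hqs : ∀ r : Fin d → ℤ, q r j.succ = r j := fun r => by
      simp [hqdef]
    rw [hqs, hqs, hm] at this
    omega
  · rintro ⟨x, hx1, i₀, hi₀⟩
    set p : Fin d → ℤ := fun j => x j.succ - x 0 with hp
    have hq : ∀ i, q p i = x i - x 0 := by
      intro i
      induction i using Fin.cases with
      | zero => rw [hqdef]; simp
      | succ j => rw [hqdef]; simp [hp]
    have hpA : (fun i => (p i : ℝ)) ∈ (t : ℝ) • Qd d := by
      rw [stmt10_mem_dilated_Qd_int ht]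
      intro i j
      show q p i - q p j ≤ (t:ℤ)
      rw [hq, hq]
      have h1 := (hx1 i).2
      have h2 := (hx1 j).1
      omega
    have hm : m p = - x 0 := by
      have h1 : m p ≤ - x 0 := by
        have := hm_le p i₀
        obtain ⟨i₁, hi₁⟩ := hm_ex p
        rw [hq i₀, hi₀] at this
        omega
      have h2 : - x 0 ≤ m p := by
        rw [hmdef]
        apply Finset.le_inf'
        intro i _
        rw [hq i]
        have := (hx1 i).1
        omega
      omega
    refine ⟨⟨p, hpA⟩, ?_⟩
    apply Subtype.ext
    funext i
    show q p i - m p = x i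
    rw [hq i, hm]
    ring

private lemma stmt10_image_eq (d : ℕ) :
    Qd d = (fun x (i : Fin d) => x i.castSucc - x (Fin.last d)) ''
      Set.Icc (0 : Fin (d + 1) → ℝ) 1 := by
  ext y
  constructor
  · intro hy
    set m : ℝ := Finset.univ.inf' ⟨0, Finset.mem_univ 0⟩ (extCoord y) with hm
    have hm_le : ∀ i, m ≤ extCoord y i := fun i =>
      Finset.inf'_le (extCoord y) (Finset.mem_univ i)
    obtain ⟨j₀, -, hj₀⟩ := Finset.exists_mem_eq_inf' (⟨0, Finset.mem_univ 0⟩ :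
      (Finset.univ : Finset (Fin (d+1))).Nonempty) (extCoord y)
    rw [← hm] at hj₀
    have hm0 : m ≤ 0 := by
      have := hm_le 0
      simpa [extCoord] using this
    refine ⟨Fin.snoc (fun j : Fin d => y j - m) (-m), ⟨?_, ?_⟩, ?_⟩
    · intro i
      show (0:ℝ) ≤ _
      induction i using Fin.lastCases with
      | last => simp [Fin.snoc_last]; linarith
      | cast j =>
        rw [Fin.snoc_castSucc]
        have := hm_le j.succ
        simp only [extCoord, Fin.cons_succ] at this
        linarith
    · intro i
      show _ ≤ (1:ℝ)
      induction i using Fin.lastCases with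
      | last =>
        rw [Fin.snoc_last]
        have := hy 0 j₀
        simp only [extCoord, Fin.cons_zero] at this hj₀ ⊢
        rw [hj₀]
        linarith
      | cast j =>
        rw [Fin.snoc_castSucc]
        have := hy j.succ j₀
        rw [← hj₀] at this
        simp only [extCoord, Fin.cons_succ] at this
        linarith
    · funext i
      simp only [Fin.snoc_castSucc, Fin.snoc_last]
      ring
  · rintro ⟨x, ⟨hx0, hx1⟩, rfl⟩
    intro i j
    have key : ∀ k : Fin (d+1), ∃ l : Fin (d+1),
        extCoord (fun i : Fin d => x i.castSucc - x (Fin.last d)) k = x l - x (Fin.last d) := by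
      intro k
      induction k using Fin.cases with
      | zero => exact ⟨Fin.last d, by simp [extCoord]⟩
      | succ j => exact ⟨j.castSucc, by simp [extCoord]⟩
    obtain ⟨l₁, h1⟩ := key i
    obtain ⟨l₂, h2⟩ := key j
    rw [h1, h2]
    have a1 : x l₁ ≤ 1 := hx1 l₁
    have a2 : (0:ℝ) ≤ x l₂ := hx0 l₂
    linarith

end StmtTenAux

/-- `Q_d` is the image of the unit cube `[0,1]^{d+1}` under the linear
projection `φ` with `φ(e_i) = e_i` (`i = 1, …, d`) and `φ(e_{d+1}) = -e_1 - … - e_d`;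
moreover `Q_d` has the same `h^*`-polynomial as `[0,1]^{d+1}`. -/
theorem stmt10 (d : ℕ) (hd : 1 ≤ d) :
    let φ : (Fin (d + 1) → ℝ) → (Fin d → ℝ) := fun x i => x i.castSucc - x (Fin.last d)
    IsLinearMap ℝ φ ∧
    (∀ i : Fin (d + 1), i ≠ Fin.last d → φ (Pi.single i 1) = fun j : Fin d => if (j : ℕ) = (i : ℕ) then 1 else 0) ∧
    φ (Pi.single (Fin.last d) 1) = (fun _ : Fin d => -1) ∧
    Qd d = φ '' Set.Icc (0 : Fin (d + 1) → ℝ) 1 ∧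
    (∀ (h : Fin (d + 1) → ℤ) (h' : Fin (d + 2) → ℤ),
      IsHStarVector (Qd d) h →
      IsHStarVector (Set.Icc (0 : Fin (d + 1) → ℝ) 1) h' →
      (∀ i : Fin (d + 1), h i = h' i.castSucc) ∧ h' (Fin.last (d + 1)) = 0) := by
  intro φ
  have hd2 : 1 ≤ d := hd
  refine ⟨?_, ?_, ?_, ?_, ?_⟩
  · -- linearity
    constructor
    · intro x y
      funext i
      show (x + y) i.castSucc - (x + y) (Fin.last d)
        = (x i.castSucc - x (Fin.last d)) + (y i.castSucc - y (Fin.last d))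
      simp only [Pi.add_apply]
      ring
    · intro c x
      funext i
      show (c • x) i.castSucc - (c • x) (Fin.last d)
        = c * (x i.castSucc - x (Fin.last d))
      simp only [Pi.smul_apply, smul_eq_mul]
      ring
  · -- projection of e_i, i ≠ last
    intro i hi
    funext j
    simp only [φ]
    rw [Pi.single_apply, Pi.single_apply,
      if_neg (show ¬ Fin.last d = i from fun hc => hi hc.symm), sub_zero]
    congr 1
    simp [Fin.ext_iff]
  · -- projection of e_last
    funext j
    simp only [φ]
    rw [Pi.single_apply, Pi.single_apply, if_pos rfl,
      if_neg (Fin.castSucc_lt_last j).ne]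
    ring
  · -- image description
    exact stmt10_image_eq d
  · -- h* equality
    intro h h' hQ hC
    have E1 : ∀ t : ℕ, (∑ i : Fin (d+1), h i * ((t + d - (i:ℕ)).choose d : ℤ))
        = ((Polynomial.X + 1)^(d+1) - Polynomial.X^(d+1) : Polynomial ℤ).eval (t:ℤ) := by
      apply stmt10_ext_lemma
      intro t ht
      have hid := hQ t ht
      rw [stmt10_qd_count d t ht] at hid
      rw [← hid]
      have hle : t^(d+1) ≤ (t+1)^(d+1) := Nat.pow_le_pow_left (by omega) _
      rw [Nat.cast_sub hle]
      simp only [Polynomial.eval_sub, Polynomial.eval_pow, Polynomial.eval_add,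
        Polynomial.eval_X, Polynomial.eval_one]
      push_cast
      ring
    have E2 : ∀ t : ℕ, (∑ i : Fin (d+2), h' i * ((t + (d+1) - (i:ℕ)).choose (d+1) : ℤ))
        = ((Polynomial.X + 1)^(d+1) : Polynomial ℤ).eval (t:ℤ) := by
      apply stmt10_ext_lemma (d+1) h'
      intro t ht
      have hid := hC t ht
      rw [stmt10_cube_count (d+1) t ht] at hid
      rw [← hid]
      simp only [Polynomial.eval_pow, Polynomial.eval_add, Polynomial.eval_X,
        Polynomial.eval_one]
      push_cast
      ring
    have h00 : h 0 = 1 := by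
      have hE := E1 0
      rw [Finset.sum_eq_single (0 : Fin (d+1))] at hE
      · simp only [Fin.val_zero, Nat.zero_add, Nat.sub_zero, Nat.choose_self,
          Nat.cast_one, mul_one] at hE
        rw [hE]
        simp only [Polynomial.eval_sub, Polynomial.eval_pow, Polynomial.eval_add,
          Polynomial.eval_X, Polynomial.eval_one]
        push_cast
        rw [one_pow, zero_pow (Nat.succ_ne_zero d)]
        ring
      · intro i _ hi
        have hi1 : 1 ≤ (i:ℕ) := by
          rcases Nat.eq_zero_or_pos (i:ℕ) with h0 | h0
          · exact absurd (Fin.ext h0) hi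
          · exact h0
        have hilt : (i:ℕ) < d + 1 := i.isLt
        rw [Nat.choose_eq_zero_of_lt (by omega)]
        simp
      · intro hc
        exact absurd (Finset.mem_univ _) hc
    have E3 : ∀ t : ℕ, (∑ i : Fin (d+1), h i * ((t + (d+1) - (i:ℕ)).choose (d+1) : ℤ))
        = ((Polynomial.X + 1)^(d+1) : Polynomial ℤ).eval (t:ℤ) := by
      intro t
      induction t with
      | zero =>
        rw [Finset.sum_eq_single (0 : Fin (d+1))]
        · simp only [Fin.val_zero, Nat.zero_add, Nat.sub_zero, Nat.choose_self,
            Nat.cast_one, mul_one, h00]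
          simp [Polynomial.eval_pow]
        · intro i _ hi
          have hi1 : 1 ≤ (i:ℕ) := by
            rcases Nat.eq_zero_or_pos (i:ℕ) with h0 | h0
            · exact absurd (Fin.ext h0) hi
            · exact h0
          have hilt : (i:ℕ) < d + 1 := i.isLt
          rw [Nat.choose_eq_zero_of_lt (by omega)]
          simp
        · intro hc
          exact absurd (Finset.mem_univ _) hc
      | succ t ih =>
        have hsplit : (∑ i : Fin (d+1), h i * (((t+1) + (d+1) - (i:ℕ)).choose (d+1) : ℤ))
            = (∑ i : Fin (d+1), h i * (((t+1) + d - (i:ℕ)).choose d : ℤ))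
              + ∑ i : Fin (d+1), h i * ((t + (d+1) - (i:ℕ)).choose (d+1) : ℤ) := by
          rw [← Finset.sum_add_distrib]
          refine Finset.sum_congr rfl fun i _ => ?_
          have hi : (i:ℕ) ≤ d := Nat.lt_succ_iff.mp i.isLt
          have e1 : (t+1) + (d+1) - (i:ℕ) = (t + (d+1) - (i:ℕ)) + 1 := by omega
          have e2 : (t+1) + d - (i:ℕ) = t + (d+1) - (i:ℕ) := by omega
          rw [e1, e2, Nat.choose_succ_succ]
          push_cast
          ring
        rw [hsplit, E1 (t+1), ih]
        simp only [Polynomial.eval_sub, Polynomial.eval_pow, Polynomial.eval_add,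
          Polynomial.eval_X, Polynomial.eval_one]
        push_cast
        ring
    set g : Fin (d+2) → ℤ := Fin.snoc h 0 with hg
    have hb : ∀ t : ℕ,
        (∑ i : Fin (d+2), (h' i - g i) * ((t + (d+1) - (i:ℕ)).choose (d+1) : ℤ)) = 0 := by
      intro t
      have hsum : (∑ i : Fin (d+2), g i * ((t + (d+1) - (i:ℕ)).choose (d+1) : ℤ))
          = ∑ i : Fin (d+1), h i * ((t + (d+1) - (i:ℕ)).choose (d+1) : ℤ) := by
        rw [Fin.sum_univ_castSucc]
        have hlast : g (Fin.last (d+1)) = 0 := by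
          rw [hg]; exact Fin.snoc_last _ _
        rw [hlast, zero_mul, add_zero]
        refine Finset.sum_congr rfl fun i _ => ?_
        have hcs : g i.castSucc = h i := by
          rw [hg]; exact Fin.snoc_castSucc _ _ _
        rw [hcs, Fin.coe_castSucc]
      simp only [sub_mul]
      rw [Finset.sum_sub_distrib, hsum, E2 t, E3 t, sub_self]
    have hbz : ∀ m : ℕ, ∀ hm : m < d + 2, h' ⟨m, hm⟩ - g ⟨m, hm⟩ = 0 := by
      intro m
      induction m using Nat.strong_induction_on with
      | _ m ih =>
        intro hm
        have hmb := hb m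
        rw [Finset.sum_eq_single (⟨m, hm⟩ : Fin (d+2))] at hmb
        · rw [show m + (d+1) - ((⟨m, hm⟩ : Fin (d+2)) : ℕ) = d + 1 by simp,
            Nat.choose_self] at hmb
          simpa using hmb
        · intro j _ hj
          rcases lt_or_gt_of_ne (fun hc : (j:ℕ) = m => hj (Fin.ext hc)) with hlt | hgt
          · have hz := ih (j:ℕ) hlt j.isLt
            rw [Fin.eta] at hz
            rw [hz, zero_mul]
          · have hjlt : (j:ℕ) < d + 2 := j.isLt
            rw [Nat.choose_eq_zero_of_lt (by omega)]
            simp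
        · intro hc
          exact absurd (Finset.mem_univ _) hc
    constructor
    · intro i
      have hz := hbz (i.castSucc : ℕ) i.castSucc.isLt
      rw [Fin.eta] at hz
      have hcs : g i.castSucc = h i := by
        rw [hg]; exact Fin.snoc_castSucc _ _ _
      rw [hcs] at hz
      omega
    · have hz := hbz (d+1) (by omega)
      have hlast : (⟨d+1, by omega⟩ : Fin (d+2)) = Fin.last (d+1) := rfl
      rw [hlast] at hz
      have hgl : g (Fin.last (d+1)) = 0 := by
        rw [hg]; exact Fin.snoc_last _ _
      rw [hgl] at hz
      omega
end
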